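/- arXiv:2111.14801 — 14 statements merged into one kernel-verified Lean document; each statement's English description precedes it below -/
import Mathlib

section
/- Let p ≥ 1 and let F : [0, ∞) → [0, ∞) be differentiable with F(0) = 0. If the function t ↦ F(t)^{1/p} is concave on [0, ∞), then the function t ↦ F'(t)/t^{p-1} is non-increasing on (0, ∞). -/
open Set Filter

/-- Let `p ≥ 1` and `F : [0,∞) → [0,∞)` be differentiable with `F 0 = 0`.
If `t ↦ F t ^ (1/p)` is concave on `[0,∞)`, then `t ↦ F' t / t ^ (p-1)` is
non-increasing on `(0,∞)`. -/
theorem stmt_0 (p : ℝ) (hp : 1 ≤ p) (F F' : ℝ → ℝ)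
    (hFnonneg : ∀ t ∈ Set.Ici (0:ℝ), 0 ≤ F t)
    (hF0 : F 0 = 0)
    (hFderiv : ∀ t ∈ Set.Ici (0:ℝ), HasDerivWithinAt F (F' t) (Set.Ici 0) t)
    (hconc : ConcaveOn ℝ (Set.Ici 0) (fun t => F t ^ (1 / p))) :
    AntitoneOn (fun t => F' t / t ^ (p - 1)) (Set.Ioi 0) := by
  have hp0 : (0:ℝ) < p := lt_of_lt_of_le one_pos hp
  have hp' : p ≠ 0 := ne_of_gt hp0
  have h1p : (0:ℝ) < 1/p := by positivity
  set G : ℝ → ℝ := fun t => F t ^ (1/p) with hG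
  have hG0 : G 0 = 0 := by
    simp only [hG, hF0]
    exact Real.zero_rpow (ne_of_gt h1p)
  have hGnonneg : ∀ t, 0 ≤ t → 0 ≤ G t := fun t ht => Real.rpow_nonneg (hFnonneg t ht) _
  have hFd : ∀ u : ℝ, 0 < u → HasDerivAt F (F' u) u := fun u hu =>
    (hFderiv u (le_of_lt hu)).hasDerivAt (Ici_mem_nhds hu)
  intro s hs t ht hst
  simp only [Set.mem_Ioi] at hs ht
  rcases hst.eq_or_lt with rfl | hst'
  · exact le_rfl
  show F' t / t ^ (p-1) ≤ F' s / s ^ (p-1)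
  by_cases hFs0 : F s = 0
  · -- Case A : F vanishes at s, hence on [s, ∞)
    have hGs : G s = 0 := by
      simp only [hG, hFs0]
      exact Real.zero_rpow (ne_of_gt h1p)
    have hFzero : ∀ v, s ≤ v → F v = 0 := by
      intro v hv
      rcases hv.eq_or_lt with rfl | hv'
      · exact hFs0
      have hsl := hconc.slope_anti_adjacent (Set.self_mem_Ici)
        (Set.mem_Ici.2 (by linarith : (0:ℝ) ≤ v)) hs hv'
      rw [hGs, hG0] at hsl
      have hGv0 : G v ≤ 0 := by
        have h2 : (G v - 0) / (v - s) ≤ 0 := by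
          simpa using hsl
        have := (div_nonpos_iff.1 h2)
        rcases this with ⟨h3, h4⟩ | ⟨h3, h4⟩
        · linarith
        · linarith
      have hGv : G v = 0 := le_antisymm hGv0 (hGnonneg v (by linarith))
      have := (Real.rpow_eq_zero (hFnonneg v (by linarith : (0:ℝ) ≤ v)) (ne_of_gt h1p)).1 hGv
      exact this
    have hFs' : F' s = 0 := by
      have h1 : HasDerivWithinAt F 0 (Set.Ici s) s :=
        (hasDerivWithinAt_const s (Set.Ici s) (0:ℝ)).congr
          (fun v hv => hFzero v hv) (hFzero s le_rfl)
      have h2 : HasDerivWithinAt F (F' s) (Set.Ici s) s := (hFd s hs).hasDerivWithinAt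
      have e1 := h1.derivWithin (uniqueDiffOn_Ici s s Set.self_mem_Ici)
      have e2 := h2.derivWithin (uniqueDiffOn_Ici s s Set.self_mem_Ici)
      rw [e2] at e1
      exact e1
    have hFt' : F' t = 0 := by
      have heq : F =ᶠ[nhds t] fun _ => (0:ℝ) :=
        eventually_of_mem (Ioi_mem_nhds hst') (fun v hv => hFzero v (le_of_lt hv))
      have h1 : HasDerivAt F 0 t :=
        (hasDerivAt_const t (0:ℝ)).congr_of_eventuallyEq heq
      exact (h1.unique (hFd t ht)).symm
    rw [hFs', hFt']
    simp
  · -- Case B : F positive at s, hence on [s, ∞)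
    have hFs : 0 < F s := (hFnonneg s (le_of_lt hs)).lt_of_ne (Ne.symm hFs0)
    have hGsp : 0 < G s := Real.rpow_pos_of_pos hFs _
    have hFt : 0 < F t := by
      by_contra h
      have hFt0 : F t = 0 := le_antisymm (not_lt.1 h) (hFnonneg t (le_of_lt ht))
      have hGt : G t = 0 := by
        simp only [hG, hFt0]; exact Real.zero_rpow (ne_of_gt h1p)
      have hsl := hconc.slope_anti_adjacent (Set.mem_Ici.2 (le_of_lt hs))
        (Set.mem_Ici.2 (by linarith : (0:ℝ) ≤ t + 1)) hst' (lt_add_one t)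
      rw [hGt] at hsl
      have h2 : (0 - G s) / (t - s) < 0 :=
        div_neg_of_neg_of_pos (by linarith) (by linarith)
      have h3 : 0 ≤ (G (t+1) - 0) / (t + 1 - t) := by
        have := hGnonneg (t+1) (by linarith)
        rw [show t + 1 - t = (1:ℝ) by ring]
        simpa using this
      linarith
    -- derivative of G
    set g : ℝ → ℝ := fun u => F' u * (1/p) * F u ^ (1/p - 1) with hg
    have hGd : ∀ u, 0 < u → 0 < F u → HasDerivAt G (g u) u := fun u hu hFu =>
      (hFd u hu).rpow_const (Or.inl (ne_of_gt hFu))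
    have hmem_s : s ∈ Set.Ici (0:ℝ) := le_of_lt hs
    have hmem_t : t ∈ Set.Ici (0:ℝ) := le_of_lt ht
    -- g antitone between s and t
    have hgts : g t ≤ g s := by
      have h1 : g t ≤ slope G s t :=
        hconc.le_slope_of_hasDerivAt hmem_s hmem_t hst' (hGd t ht hFt)
      have h2 : slope G s t ≤ g s :=
        hconc.slope_le_of_hasDerivAt hmem_s hmem_t hst' (hGd s hs hFs)
      linarith
    -- g t nonneg
    have hgt0 : 0 ≤ g t := by
      have hkey : ∀ n : ℕ, -(G t) / ((n:ℝ)+1) ≤ g t := by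
        intro n
        have hn1 : (0:ℝ) < (n:ℝ) + 1 := by positivity
        have hlt : t < t + ((n:ℝ)+1) := by linarith
        have hsl := hconc.slope_le_of_hasDerivAt hmem_t
          (Set.mem_Ici.2 (by linarith : (0:ℝ) ≤ t + ((n:ℝ)+1))) hlt (hGd t ht hFt)
        rw [slope_def_field] at hsl
        have hGnn : 0 ≤ G (t + ((n:ℝ)+1)) := hGnonneg _ (by linarith)
        calc -(G t) / ((n:ℝ)+1)
            ≤ (G (t + ((n:ℝ)+1)) - G t) / ((n:ℝ)+1) := by
              exact (div_le_div_iff_of_pos_right hn1).mpr (by linarith)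
          _ ≤ g t := by
              rw [show t + ((n:ℝ)+1) - t = (n:ℝ)+1 by ring] at hsl
              exact hsl
      have htend : Tendsto (fun n : ℕ => -(G t)/((n:ℝ)+1)) atTop (nhds 0) := by
        have h := tendsto_one_div_add_atTop_nhds_zero_nat.const_mul (-(G t))
        rw [mul_zero] at h
        simpa [div_eq_mul_inv, neg_mul, mul_one_div] using h
      exact le_of_tendsto' htend hkey
    have hgs0 : 0 ≤ g s := le_trans hgt0 hgts
    -- slopes from origin antitone
    have hGslope : G t / t ≤ G s / s := by
      have hanti := hconc.slope_anti (Set.self_mem_Ici)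
      have h := hanti ⟨hmem_s, ne_of_gt hs⟩ ⟨hmem_t, ne_of_gt ht⟩ hst
      rw [slope_def_field, slope_def_field, hG0] at h
      simpa using h
    have hGts0 : 0 ≤ G t / t := div_nonneg (hGnonneg t (le_of_lt ht)) (le_of_lt ht)
    -- key identity
    have key : ∀ u, 0 < u → 0 < F u →
        F' u / u ^ (p-1) = p * g u * (G u / u) ^ (p-1) := by
      intro u hu hFu
      have e1 : (G u / u) ^ (p-1) = F u ^ (1 - 1/p) / u ^ (p-1) := by
        rw [Real.div_rpow (hGnonneg u (le_of_lt hu)) (le_of_lt hu)]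
        congr 1
        simp only [hG]
        rw [← Real.rpow_mul (hFnonneg u (le_of_lt hu))]
        congr 1
        field_simp
      have e2 : F u ^ (1/p - 1) * F u ^ (1 - 1/p) = 1 := by
        rw [← Real.rpow_add hFu]
        norm_num
      rw [e1, hg]
      have : p * (F' u * (1 / p) * F u ^ (1 / p - 1)) * (F u ^ (1 - 1 / p) / u ^ (p - 1))
          = (p * (1/p)) * (F u ^ (1/p - 1) * F u ^ (1 - 1/p)) * (F' u / u ^ (p-1)) := by
        ring
      rw [this, e2, mul_one_div_cancel hp', one_mul, one_mul]
    rw [key s hs hFs, key t ht hFt]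
    have hrt : (G t / t)^(p-1) ≤ (G s / s)^(p-1) :=
      Real.rpow_le_rpow hGts0 hGslope (by linarith)
    have hrt0 : 0 ≤ (G t / t)^(p-1) := Real.rpow_nonneg hGts0 _
    have h1 : p * g t ≤ p * g s := mul_le_mul_of_nonneg_left hgts (le_of_lt hp0)
    exact mul_le_mul h1 hrt hrt0 (mul_nonneg (le_of_lt hp0) hgs0)
end

section
/- Let p ≥ 1 and let G : [0, ∞) → [0, ∞) be continuous on [0, ∞), differentiable on (0, ∞), concave, and satisfy G(0) = 0. Then the function H : [0, ∞) → [0, ∞) defined by H(s) = G(s^{1/p})^p is concave on [0, ∞). -/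
open Real Set

/-- Auxiliary: for `c, d ≥ 0` and `p ≥ 1`, the function `s ↦ (c * s^(1/p) + d)^p`
is concave on `[0,∞)`. -/
lemma aux_concave_affine_pow (p c d : ℝ) (hp : 1 ≤ p) (hc : 0 ≤ c) (hd : 0 ≤ d) :
    ConcaveOn ℝ (Set.Ici 0) (fun s : ℝ => (c * s ^ (1 / p) + d) ^ p) := by
  have hp0 : 0 < p := lt_of_lt_of_le one_pos hp
  have hp' : 0 ≤ 1 / p := by positivity
  -- continuity on Ici 0
  have hcont : ContinuousOn (fun s : ℝ => (c * s ^ (1 / p) + d) ^ p) (Set.Ici 0) := by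
    apply ContinuousOn.rpow_const
    · exact ((continuousOn_id.rpow_const (fun x _ => Or.inr hp')).const_smul c).add
        continuousOn_const
    · exact fun x _ => Or.inr hp0.le
  -- derivative formula on Ioi 0
  have hderiv : ∀ t ∈ Set.Ioi (0:ℝ),
      HasDerivAt (fun s : ℝ => (c * s ^ (1 / p) + d) ^ p)
        ((c * (1 / p * t ^ (1 / p - 1))) * p * (c * t ^ (1 / p) + d) ^ (p - 1)) t := by
    intro t ht
    have ht0 : (t:ℝ) ≠ 0 := ne_of_gt ht
    have h1 : HasDerivAt (fun s : ℝ => c * s ^ (1 / p) + d)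
        (c * (1 / p * t ^ (1 / p - 1))) t := by
      have := (Real.hasDerivAt_rpow_const (p := 1 / p) (Or.inl ht0)).const_mul c
      simpa using this.add_const d
    exact h1.rpow_const (Or.inr hp)
  -- the derivative is antitone on Ioi 0
  have hanti : AntitoneOn
      (fun t : ℝ => (c * (1 / p * t ^ (1 / p - 1))) * p * (c * t ^ (1 / p) + d) ^ (p - 1))
      (Set.Ioi 0) := by
    have key : ∀ t ∈ Set.Ioi (0:ℝ),
        (c * (1 / p * t ^ (1 / p - 1))) * p * (c * t ^ (1 / p) + d) ^ (p - 1)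
          = c * (c + d * t ^ (-(1 / p))) ^ (p - 1) := by
      intro t ht
      have ht' : (0:ℝ) < t := ht
      have hy0 : 0 ≤ c * t ^ (1 / p) + d := by positivity
      have h1 : t ^ (1 / p - 1) = (t ^ (-(1 / p))) ^ (p - 1) := by
        rw [← Real.rpow_mul ht'.le]
        congr 1
        field_simp
        ring
      have h2 : c + d * t ^ (-(1 / p)) = (c * t ^ (1 / p) + d) * t ^ (-(1 / p)) := by
        rw [add_mul, mul_assoc, ← Real.rpow_add ht', add_neg_cancel, Real.rpow_zero, mul_one]
      rw [h2, Real.mul_rpow hy0 (Real.rpow_nonneg ht'.le _), ← h1]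
      field_simp
    intro x hx y hy hxy
    dsimp only
    rw [key x hx, key y hy]
    have hx' : (0:ℝ) < x := hx
    have hy' : (0:ℝ) < y := hy
    apply mul_le_mul_of_nonneg_left _ hc
    apply Real.rpow_le_rpow (by positivity) _ (by linarith)
    have : y ^ (-(1 / p)) ≤ x ^ (-(1 / p)) :=
      Real.rpow_le_rpow_of_nonpos hx' hxy (neg_nonpos.mpr hp')
    nlinarith
  exact AntitoneOn.concaveOn_of_deriv (convex_Ici 0) hcont
    (fun t ht => ((hderiv t (by simpa using ht)).differentiableAt).differentiableWithinAt)
    (by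
      intro x hx y hy hxy
      rw [interior_Ici] at hx hy
      rw [(hderiv x hx).deriv, (hderiv y hy).deriv]
      exact hanti hx hy hxy)

/-- Let `p ≥ 1` and `G : [0,∞) → [0,∞)` be continuous on `[0,∞)`,
differentiable on `(0,∞)`, concave, with `G 0 = 0`. Then
`H s = G (s ^ (1/p)) ^ p` is concave on `[0,∞)`. -/
theorem stmt_1 (p : ℝ) (hp : 1 ≤ p) (G : ℝ → ℝ)
    (hGnonneg : ∀ s ∈ Set.Ici (0:ℝ), 0 ≤ G s)
    (hGcont : ContinuousOn G (Set.Ici 0))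
    (hGdiff : DifferentiableOn ℝ G (Set.Ioi 0))
    (hGconc : ConcaveOn ℝ (Set.Ici 0) G)
    (hG0 : G 0 = 0) :
    ConcaveOn ℝ (Set.Ici 0) (fun s => G (s ^ (1 / p)) ^ p) := by
  have hp0 : 0 < p := lt_of_lt_of_le one_pos hp
  constructor
  · exact convex_Ici 0
  intro a ha b hb la lb hla hlb hab
  have ha' : (0:ℝ) ≤ a := ha
  have hb' : (0:ℝ) ≤ b := hb
  simp only [smul_eq_mul]
  set s := la * a + lb * b with hsdef
  have hs0 : 0 ≤ s := add_nonneg (mul_nonneg hla ha') (mul_nonneg hlb hb')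
  have H0 : G ((0:ℝ) ^ (1 / p)) ^ p = 0 := by
    rw [Real.zero_rpow (by positivity), hG0, Real.zero_rpow (ne_of_gt hp0)]
  rcases eq_or_lt_of_le hs0 with hseq | hspos
  · -- degenerate case s = 0
    have h1 : la * a = 0 := by nlinarith [mul_nonneg hla ha', mul_nonneg hlb hb']
    have h2 : lb * b = 0 := by nlinarith [mul_nonneg hla ha', mul_nonneg hlb hb']
    have hHa : la * G (a ^ (1 / p)) ^ p = 0 := by
      rcases mul_eq_zero.mp h1 with h | h
      · rw [h, zero_mul]
      · rw [h, H0, mul_zero]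
    have hHb : lb * G (b ^ (1 / p)) ^ p = 0 := by
      rcases mul_eq_zero.mp h2 with h | h
      · rw [h, zero_mul]
      · rw [h, H0, mul_zero]
    rw [hHa, hHb, ← hseq, H0]
    norm_num
  · -- main case s > 0
    set t := s ^ (1 / p) with htdef
    have ht : 0 < t := Real.rpow_pos_of_pos hspos _
    have hdG : DifferentiableAt ℝ G t := hGdiff.differentiableAt (Ioi_mem_nhds ht)
    set c := deriv G t with hcdef
    have hder : HasDerivAt G c t := hdG.hasDerivAt
    have htmem : t ∈ Set.Ici (0:ℝ) := mem_Ici.mpr ht.le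
    -- tangent line inequality
    have htan : ∀ u ∈ Set.Ici (0:ℝ), G u ≤ c * u + (G t - c * t) := by
      intro u hu
      rcases lt_trichotomy u t with h | h | h
      · have h1 := hGconc.le_slope_of_hasDerivAt hu htmem h hder
        rw [slope_def_field] at h1
        have h2 := (le_div_iff₀ (by linarith)).mp h1
        linarith
      · rw [h]; linarith
      · have h1 := hGconc.slope_le_of_hasDerivAt htmem hu h hder
        rw [slope_def_field] at h1
        have h2 := (div_le_iff₀ (by linarith)).mp h1
        linarith
    have hd : 0 ≤ G t - c * t := by
      have h0 := htan 0 (mem_Ici.mpr le_rfl)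
      rw [hG0, mul_zero, zero_add] at h0
      exact h0
    have hGt : 0 ≤ G t := hGnonneg t htmem
    have hc : 0 ≤ c := by
      by_contra hneg
      push_neg at hneg
      have hcpos : 0 < -c := neg_pos.mpr hneg
      set u := t + (G t + 1) / (-c) with hu
      have hfrac : 0 ≤ (G t + 1) / (-c) := by positivity
      have huge : 0 ≤ u := by rw [hu]; linarith
      have h1 := htan u (mem_Ici.mpr huge)
      have hce : c * ((G t + 1) / (-c)) = -(G t + 1) := by
        rw [mul_div_assoc', div_neg, mul_div_cancel_left₀ _ hneg.ne]
      rw [hu, mul_add, hce] at h1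
      have := hGnonneg u (mem_Ici.mpr huge)
      rw [hu] at this
      linarith
    have hF := aux_concave_affine_pow p c (G t - c * t) hp hc hd
    have hle : ∀ u : ℝ, 0 ≤ u →
        G (u ^ (1 / p)) ^ p ≤ (c * u ^ (1 / p) + (G t - c * t)) ^ p := by
      intro u hu
      exact Real.rpow_le_rpow (hGnonneg _ (mem_Ici.mpr (Real.rpow_nonneg hu _)))
        (htan _ (mem_Ici.mpr (Real.rpow_nonneg hu _))) hp0.le
    have hchain := hF.2 ha hb hla hlb hab
    simp only [smul_eq_mul] at hchain
    have hFs : (c * s ^ (1 / p) + (G t - c * t)) ^ p = G (s ^ (1 / p)) ^ p := by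
      rw [← htdef]
      congr 1
      ring
    calc la * G (a ^ (1 / p)) ^ p + lb * G (b ^ (1 / p)) ^ p
        ≤ la * (c * a ^ (1 / p) + (G t - c * t)) ^ p
            + lb * (c * b ^ (1 / p) + (G t - c * t)) ^ p :=
          add_le_add (mul_le_mul_of_nonneg_left (hle a ha') hla)
            (mul_le_mul_of_nonneg_left (hle b hb') hlb)
      _ ≤ (c * s ^ (1 / p) + (G t - c * t)) ^ p := hchain
      _ = G (s ^ (1 / p)) ^ p := hFs
end

section
/- Let F(t) = √(1+t) + t² for t ≥ 0. Then the function t ↦ F'(t)/t is non-increasing on (0, ∞), while the function t ↦ F(t)^{1/2} is convex on [0, ∞). (Hence the monotonicity of F'(t)/t^{p-1} for p = 2 does not imply concavity of F^{1/2}.) -/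
open Real Set

lemma hFd (x : ℝ) (hx : 0 < x) :
    HasDerivAt (fun t : ℝ => Real.sqrt (1 + t) + t ^ 2)
      (1 / (2 * Real.sqrt (1 + x)) + 2 * x) x := by
  have h1 : HasDerivAt (fun t : ℝ => 1 + t) 1 x := by
    simpa using (hasDerivAt_id x).const_add (1 : ℝ)
  have hs : HasDerivAt (fun t : ℝ => Real.sqrt (1 + t)) (1 / (2 * Real.sqrt (1 + x))) x := by
    simpa [Function.comp_def] using (Real.hasDerivAt_sqrt (by positivity : (1:ℝ) + x ≠ 0)).comp x h1
  have hp : HasDerivAt (fun t : ℝ => t ^ 2) (2 * x) x := by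
    simpa using hasDerivAt_pow 2 x
  exact hs.add hp

lemma hF'd (x : ℝ) (hx : 0 < x) :
    HasDerivAt (fun t : ℝ => 1 / (2 * Real.sqrt (1 + t)) + 2 * t)
      (-(2 * (1 / (2 * Real.sqrt (1 + x)))) / (2 * Real.sqrt (1 + x)) ^ 2 + 2) x := by
  have h1 : HasDerivAt (fun t : ℝ => 1 + t) 1 x := by
    simpa using (hasDerivAt_id x).const_add (1 : ℝ)
  have hs : HasDerivAt (fun t : ℝ => Real.sqrt (1 + t)) (1 / (2 * Real.sqrt (1 + x))) x := by
    simpa [Function.comp_def] using (Real.hasDerivAt_sqrt (by positivity : (1:ℝ) + x ≠ 0)).comp x h1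
  have hinv : HasDerivAt (fun t : ℝ => (2 * Real.sqrt (1 + t))⁻¹)
      (-(2 * (1 / (2 * Real.sqrt (1 + x)))) / (2 * Real.sqrt (1 + x)) ^ 2) x :=
    (hs.const_mul 2).inv (by positivity)
  have h2 : HasDerivAt (fun t : ℝ => 2 * t) 2 x := by
    simpa using (hasDerivAt_id x).const_mul (2 : ℝ)
  simpa [one_div, Pi.add_def] using hinv.add h2

/-- For `F t = √(1+t) + t²` (with `F' t = 1/(2√(1+t)) + 2t`), the map
`t ↦ F' t / t` is non-increasing on `(0,∞)`, while `t ↦ F t ^ (1/2)` is convex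
on `[0,∞)`. -/
theorem stmt_2 :
    AntitoneOn (fun t : ℝ => (1 / (2 * Real.sqrt (1 + t)) + 2 * t) / t) (Set.Ioi 0) ∧
    ConvexOn ℝ (Set.Ici 0) (fun t : ℝ => (Real.sqrt (1 + t) + t ^ 2) ^ ((1:ℝ) / 2)) := by
  constructor
  · -- antitone part
    intro s hs t ht hst
    simp only [Set.mem_Ioi] at hs ht
    have has : (1:ℝ) ≤ Real.sqrt (1 + s) := by
      have := Real.sqrt_le_sqrt (show (1:ℝ) ≤ 1 + s by linarith)
      simpa using this
    have hat : (1:ℝ) ≤ Real.sqrt (1 + t) := by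
      have := Real.sqrt_le_sqrt (show (1:ℝ) ≤ 1 + t by linarith)
      simpa using this
    have hab : Real.sqrt (1 + s) ≤ Real.sqrt (1 + t) := Real.sqrt_le_sqrt (by linarith)
    have key : 1 / (2 * (t * Real.sqrt (1 + t))) ≤ 1 / (2 * (s * Real.sqrt (1 + s))) := by
      apply one_div_le_one_div_of_le
      · positivity
      · have : s * Real.sqrt (1 + s) ≤ t * Real.sqrt (1 + t) :=
          mul_le_mul hst hab (by linarith) (by linarith)
        linarith
    have e1 : ∀ (x : ℝ), 0 < x → (1 / (2 * Real.sqrt (1 + x)) + 2 * x) / x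
        = 1 / (2 * (x * Real.sqrt (1 + x))) + 2 := by
      intro x hx
      have : Real.sqrt (1 + x) > 0 := by positivity
      field_simp
    show (1 / (2 * Real.sqrt (1 + t)) + 2 * t) / t ≤ (1 / (2 * Real.sqrt (1 + s)) + 2 * s) / s
    rw [e1 s hs, e1 t ht]
    linarith
  · -- convexity part
    set g : ℝ → ℝ := fun t => (Real.sqrt (1 + t) + t ^ 2) ^ ((1:ℝ) / 2) with hgdef
    have hFpos : ∀ x : ℝ, 0 < x → 0 < Real.sqrt (1 + x) + x ^ 2 := by
      intro x hx; positivity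
    set G : ℝ → ℝ := fun t => (1 / (2 * Real.sqrt (1 + t)) + 2 * t) * ((1:ℝ) / 2) *
      (Real.sqrt (1 + t) + t ^ 2) ^ ((1:ℝ) / 2 - 1) with hGdef
    have hg : ∀ x ∈ Set.Ioi (0:ℝ), HasDerivAt g (G x) x := by
      intro x hx
      exact (hFd x hx).rpow_const (Or.inl (hFpos x hx).ne')
    have hEv : ∀ x ∈ Set.Ioi (0:ℝ), deriv g =ᶠ[nhds x] G := by
      intro x hx
      filter_upwards [isOpen_Ioi.mem_nhds hx] with y hy
      exact (hg y hy).deriv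
    have hG : ∀ x ∈ Set.Ioi (0:ℝ), HasDerivAt G
        ((-(2 * (1 / (2 * Real.sqrt (1 + x)))) / (2 * Real.sqrt (1 + x)) ^ 2 + 2) * ((1:ℝ)/2) *
          ((Real.sqrt (1 + x) + x ^ 2) ^ ((1:ℝ) / 2 - 1)) +
        ((1 / (2 * Real.sqrt (1 + x)) + 2 * x) * ((1:ℝ)/2)) *
          ((1 / (2 * Real.sqrt (1 + x)) + 2 * x) * ((1:ℝ) / 2 - 1) *
            (Real.sqrt (1 + x) + x ^ 2) ^ ((1:ℝ) / 2 - 1 - 1))) x := by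
      intro x hx
      have hA : HasDerivAt (fun t : ℝ => (Real.sqrt (1 + t) + t ^ 2) ^ ((1:ℝ) / 2 - 1))
          ((1 / (2 * Real.sqrt (1 + x)) + 2 * x) * ((1:ℝ) / 2 - 1) *
            (Real.sqrt (1 + x) + x ^ 2) ^ ((1:ℝ) / 2 - 1 - 1)) x :=
        (hFd x hx).rpow_const (Or.inl (hFpos x hx).ne')
      have hB : HasDerivAt (fun t : ℝ => (1 / (2 * Real.sqrt (1 + t)) + 2 * t) * ((1:ℝ)/2))
          ((-(2 * (1 / (2 * Real.sqrt (1 + x)))) / (2 * Real.sqrt (1 + x)) ^ 2 + 2) * ((1:ℝ)/2)) x :=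
        (hF'd x hx).mul_const _
      exact hB.mul hA
    refine convexOn_of_deriv2_nonneg (convex_Ici 0) ?_ ?_ ?_ ?_
    · -- continuity
      apply Continuous.continuousOn
      apply Continuous.rpow_const
      · exact (Real.continuous_sqrt.comp (continuous_const.add continuous_id)).add (continuous_pow 2)
      · intro x; right; norm_num
    · rw [interior_Ici]
      intro x hx
      exact (hg x hx).differentiableAt.differentiableWithinAt
    · rw [interior_Ici]
      intro x hx
      exact ((hG x hx).differentiableAt.congr_of_eventuallyEq (hEv x hx)).differentiableWithinAt
    · rw [interior_Ici]
      intro x hx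
      have hx' : (0:ℝ) < x := hx
      have hder : deriv^[2] g x = deriv G x := by
        simp only [Function.iterate_succ, Function.iterate_zero, Function.comp_apply, id]
        exact (hEv x hx).deriv_eq
      rw [hder, (hG x hx).deriv]
      set u := Real.sqrt (1 + x) with hu
      have hu0 : 0 < u := by positivity
      have hu1 : (1:ℝ) ≤ u := by
        have := Real.sqrt_le_sqrt (show (1:ℝ) ≤ 1 + x by linarith)
        simpa [hu] using this
      have hu2 : u ^ 2 = 1 + x := Real.sq_sqrt (by linarith)
      have hQF : (u + x ^ 2) ^ ((1:ℝ) / 2 - 1)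
          = (u + x ^ 2) ^ ((1:ℝ) / 2 - 1 - 1) * (u + x ^ 2) := by
        rw [← Real.rpow_add_one (hFpos x hx).ne']
        norm_num
        rfl
      rw [hQF]
      set Q := (u + x ^ 2) ^ ((1:ℝ) / 2 - 1 - 1) with hQ
      have hQ0 : 0 ≤ Q := Real.rpow_nonneg (by positivity) _
      have key : 0 ≤ 2 * (u + x ^ 2) * (-(2 * (1 / (2 * u))) / (2 * u) ^ 2 + 2)
          - (1 / (2 * u) + 2 * x) ^ 2 := by
        have h4 : -(2 * (1 / (2 * u))) / (2 * u) ^ 2 + 2 = 2 - 1 / (4 * u ^ 3) := by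
          field_simp; ring
        rw [h4]
        have hx2 : x = u ^ 2 - 1 := by linarith
        have expand : 2 * (u + x ^ 2) * (2 - 1 / (4 * u ^ 3)) - (1 / (2 * u) + 2 * x) ^ 2
            = (6 * u ^ 4 + 12 * u ^ 2 - 3 * u - 2) / (4 * u ^ 3) := by
          rw [hx2]; field_simp; ring
        rw [expand]
        apply div_nonneg _ (by positivity)
        nlinarith [sq_nonneg u, sq_nonneg (u - 1), pow_le_pow_left₀ (by norm_num : (0:ℝ) ≤ 1) hu1 4]
      have factored : (-(2 * (1 / (2 * u))) / (2 * u) ^ 2 + 2) * ((1:ℝ)/2) * (Q * (u + x ^ 2)) +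
          ((1 / (2 * u) + 2 * x) * ((1:ℝ)/2)) *
            ((1 / (2 * u) + 2 * x) * ((1:ℝ) / 2 - 1) * Q)
          = Q * (2 * (u + x ^ 2) * (-(2 * (1 / (2 * u))) / (2 * u) ^ 2 + 2)
              - (1 / (2 * u) + 2 * x) ^ 2) / 4 := by
        ring
      rw [factored]
      positivity
end

section
/- Let G : [0, ∞) → [0, ∞) be continuous and concave with G(0) = 0 and G(t) > 0 for all t > 0. Define φ(t) = ∫₁^t 1/G(τ) dτ for t ∈ (0, ∞); then φ is strictly increasing on (0, ∞), and denoting by ψ the inverse function of φ (defined on the image interval φ((0, ∞))), the function s ↦ log ψ(s) is concave on that interval. -/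
open Set Filter intervalIntegral

/-- Let `G : [0,∞) → [0,∞)` be continuous and concave with `G 0 = 0` and
`G > 0` on `(0,∞)`. Define `φ t = ∫ τ in 1..t, 1 / G τ` for `t > 0`; then `φ` is strictly
increasing on `(0,∞)` and, for any inverse `ψ` of `φ` on the image `φ '' (0,∞)`,
the function `s ↦ log (ψ s)` is concave on that image. -/
theorem stmt_3 (G : ℝ → ℝ)
    (hGnonneg : ∀ t ∈ Set.Ici (0:ℝ), 0 ≤ G t)
    (hGcont : ContinuousOn G (Set.Ici 0))
    (hGconc : ConcaveOn ℝ (Set.Ici 0) G)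
    (hG0 : G 0 = 0)
    (hGpos : ∀ t ∈ Set.Ioi (0:ℝ), 0 < G t)
    (φ ψ : ℝ → ℝ)
    (hφ : ∀ t ∈ Set.Ioi (0:ℝ), φ t = ∫ τ in (1:ℝ)..t, 1 / G τ)
    (hψ : ∀ t ∈ Set.Ioi (0:ℝ), ψ (φ t) = t) :
    StrictMonoOn φ (Set.Ioi 0) ∧
    ConcaveOn ℝ (φ '' Set.Ioi 0) (fun s => Real.log (ψ s)) := by
  -- `1/G` is continuous on `(0,∞)`
  have hinv : ContinuousOn (fun τ => 1 / G τ) (Set.Ioi 0) :=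
    continuousOn_const.div (hGcont.mono Set.Ioi_subset_Ici_self)
      (fun t ht => (hGpos t ht).ne')
  -- integrability of `1/G` on intervals inside `(0,∞)`
  have hInt : ∀ a b : ℝ, 0 < a → 0 < b →
      IntervalIntegrable (fun τ => 1 / G τ) MeasureTheory.volume a b := by
    intro a b ha hb
    apply (hinv.mono ?_).intervalIntegrable
    intro x hx
    exact (lt_min ha hb).trans_le hx.1
  -- φ has derivative 1/G t at every t > 0
  have hderiv : ∀ t ∈ Set.Ioi (0:ℝ), HasDerivAt φ (1 / G t) t := by
    intro t ht
    have hF : HasDerivAt (fun u => ∫ τ in (1:ℝ)..u, 1 / G τ) (1 / G t) t := by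
      refine intervalIntegral.integral_hasDerivAt_right (hInt 1 t one_pos ht) ?_ ?_
      · exact ContinuousOn.stronglyMeasurableAtFilter isOpen_Ioi hinv t ht
      · exact hinv.continuousAt (isOpen_Ioi.mem_nhds ht)
    apply hF.congr_of_eventuallyEq
    filter_upwards [isOpen_Ioi.mem_nhds ht] with u hu
    exact hφ u hu
  -- φ is strictly monotone on (0,∞)
  have hφcont : ContinuousOn φ (Set.Ioi 0) := fun t ht =>
    ((hderiv t ht).continuousAt).continuousWithinAt
  have hmono : StrictMonoOn φ (Set.Ioi 0) := by
    apply strictMonoOn_of_deriv_pos (convex_Ioi 0) hφcont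
    intro t ht
    rw [interior_Ioi] at ht
    rw [(hderiv t ht).deriv]
    exact div_pos one_pos (hGpos t ht)
  refine ⟨hmono, ?_⟩
  -- key concavity consequence: for 0 < s ≤ t, s * G t ≤ t * G s
  have hkey : ∀ s t : ℝ, 0 < s → s ≤ t → s * G t ≤ t * G s := by
    intro s t hs hst
    have ht : 0 < t := hs.trans_le hst
    have h1 : G ((1 - s / t) • (0:ℝ) + (s / t) • t) ≥
        (1 - s / t) * G 0 + (s / t) * G t := by
      apply hGconc.2 (Set.self_mem_Ici) (Set.mem_Ici.2 ht.le)
      · have : s / t ≤ 1 := (div_le_one ht).2 hst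
        linarith
      · positivity
      · ring
    have h2 : (1 - s / t) • (0:ℝ) + (s / t) • t = s := by
      rw [smul_eq_mul, smul_eq_mul, mul_zero, zero_add, div_mul_cancel₀ s ht.ne']
    rw [h2, hG0] at h1
    have h3 : (s / t) * G t ≤ G s := by linarith
    calc s * G t = t * ((s / t) * G t) := by field_simp
      _ ≤ t * G s := by
          apply mul_le_mul_of_nonneg_left h3 ht.le
  -- the function h = φ ∘ exp is convex on ℝ
  have hderivh : ∀ x : ℝ, HasDerivAt (fun x => φ (Real.exp x))
      (Real.exp x / G (Real.exp x)) x := by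
    intro x
    have := (hderiv (Real.exp x) (Real.exp_pos x)).comp x (Real.hasDerivAt_exp x)
    convert this using 1
    · rfl
    · rfl
    · rfl
    · ring
  have hconv : ConvexOn ℝ Set.univ (fun x => φ (Real.exp x)) := by
    apply Monotone.convexOn_univ_of_deriv (fun x => (hderivh x).differentiableAt)
    intro x y hxy
    rw [(hderivh x).deriv, (hderivh y).deriv]
    have hex : (0:ℝ) < Real.exp x := Real.exp_pos x
    have hey : (0:ℝ) < Real.exp y := Real.exp_pos y
    have hGx := hGpos _ (Set.mem_Ioi.2 hex)
    have hGy := hGpos _ (Set.mem_Ioi.2 hey)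
    rw [div_le_div_iff₀ hGx hGy]
    have := hkey (Real.exp x) (Real.exp y) hex (Real.exp_le_exp.2 hxy)
    linarith
  -- the image is convex
  have himg : Convex ℝ (φ '' Set.Ioi 0) := by
    have : IsPreconnected (φ '' Set.Ioi 0) :=
      (isPreconnected_Ioi).image φ hφcont
    exact this.ordConnected.convex
  -- conclude concavity of log ∘ ψ
  refine ⟨himg, ?_⟩
  rintro s₁ ⟨u, hu, rfl⟩ s₂ ⟨v, hv, rfl⟩ a b ha hb hab
  have hc : a • φ u + b • φ v ∈ φ '' Set.Ioi 0 :=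
    himg ⟨u, hu, rfl⟩ ⟨v, hv, rfl⟩ ha hb hab
  obtain ⟨w, hw, hwc⟩ := hc
  simp only [smul_eq_mul] at hwc ⊢
  rw [hψ u hu, hψ v hv, ← hwc, hψ w hw]
  -- need : a * log u + b * log v ≤ log w
  have hu' : (0:ℝ) < u := hu
  have hv' : (0:ℝ) < v := hv
  have hw' : (0:ℝ) < w := hw
  have h1 : φ (Real.exp (a * Real.log u + b * Real.log v)) ≤
      a * φ (Real.exp (Real.log u)) + b * φ (Real.exp (Real.log v)) := by
    have := hconv.2 (Set.mem_univ (Real.log u)) (Set.mem_univ (Real.log v)) ha hb hab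
    simpa using this
  rw [Real.exp_log hu', Real.exp_log hv'] at h1
  have h2 : φ (Real.exp (a * Real.log u + b * Real.log v)) ≤ φ w := by
    rw [hwc]
    exact h1
  -- from monotonicity: exp(...) ≤ w, hence the log inequality
  have h3 : Real.exp (a * Real.log u + b * Real.log v) ≤ w := by
    by_contra hlt
    push_neg at hlt
    exact absurd (hmono hw (Set.mem_Ioi.2 (Real.exp_pos _)) hlt) (not_lt.2 h2)
  calc a * Real.log u + b * Real.log v
      = Real.log (Real.exp (a * Real.log u + b * Real.log v)) := (Real.log_exp _).symm
    _ ≤ Real.log w := Real.log_le_log (Real.exp_pos _) h3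
end

section
/- Let p > 1, let f : (0, ∞) → [0, ∞) be continuous with M := inf{t > 0 : f(t) = 0} ∈ (0, ∞] (so f > 0 on (0, M)), and set F(t) = ∫₀^t f(τ) dτ, assumed finite for each t > 0. Suppose F^{1/p} is concave on [0, ∞) and F/f is convex on (0, M). Define φ(t) = ∫₁^t F(s)^{-1/p} ds for t ∈ (0, M). Then: (i) φ is twice differentiable on (0, M) with φ'(t) = F(t)^{-1/p} > 0 and φ''(t) = −f(t)/(p · F(t)^{1+1/p}) < 0 for all t ∈ (0, M); (ii) φ'(t) → +∞ as t → 0⁺; (iii) φ(t)/φ'(t) → 0 as t → 0⁺; (iv) φ'(t)/φ''(t) → 0 as t → 0⁺. -/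
open Set Filter intervalIntegral

/-- Let `p > 1`, `f : (0,∞) → [0,∞)` continuous, with
`M = inf {t > 0 : f t = 0} ∈ (0,∞]` (infimum taken in `EReal`, so `M = ⊤` if the set is
empty; in particular `f > 0` on `(0,M)`), `F t = ∫ τ in 0..t, f τ` finite for `t > 0`,
`F^{1/p}` concave on `[0,∞)`, `F/f` convex on `(0,M)`, and
`φ t = ∫ s in 1..t, F s ^ (-(1/p))`. Then:
(i) on `(0,M)`, `φ' t = F t ^ (-(1/p)) > 0` and `φ'' t = -(f t / (p * F t ^ (1+1/p))) < 0`;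
(ii) `φ' t → +∞` as `t → 0⁺`;
(iii) `φ t / φ' t → 0` as `t → 0⁺`;
(iv) `φ' t / φ'' t → 0` as `t → 0⁺`. -/
theorem stmt_4 (p : ℝ) (hp : 1 < p) (f : ℝ → ℝ) (M : EReal)
    (hf_cont : ContinuousOn f (Set.Ioi 0))
    (hf_nonneg : ∀ t ∈ Set.Ioi (0:ℝ), 0 ≤ f t)
    (hM : M = sInf {x : EReal | ∃ t : ℝ, 0 < t ∧ f t = 0 ∧ x = (t : EReal)})
    (hM0 : 0 < M)
    (hf_pos : ∀ t : ℝ, 0 < t → (t : EReal) < M → 0 < f t)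
    (hint : ∀ t : ℝ, 0 < t → IntervalIntegrable f MeasureTheory.volume 0 t)
    (F : ℝ → ℝ) (hF : ∀ t, F t = ∫ τ in (0:ℝ)..t, f τ)
    (hFconc : ConcaveOn ℝ (Set.Ici 0) (fun t => F t ^ (1 / p)))
    (hFf : ConvexOn ℝ {t : ℝ | 0 < t ∧ (t : EReal) < M} (fun t => F t / f t))
    (φ : ℝ → ℝ) (hφ : ∀ t : ℝ, 0 < t → φ t = ∫ s in (1:ℝ)..t, F s ^ (-(1 / p))) :
    (∀ t : ℝ, 0 < t → (t : EReal) < M →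
      HasDerivAt φ (F t ^ (-(1 / p))) t ∧
      0 < F t ^ (-(1 / p)) ∧
      HasDerivAt (fun s => F s ^ (-(1 / p))) (-(f t / (p * F t ^ (1 + 1 / p)))) t ∧
      -(f t / (p * F t ^ (1 + 1 / p))) < 0) ∧
    Tendsto (fun t => F t ^ (-(1 / p))) (nhdsWithin 0 (Set.Ioi 0)) atTop ∧
    Tendsto (fun t => φ t / F t ^ (-(1 / p))) (nhdsWithin 0 (Set.Ioi 0)) (nhds 0) ∧
    Tendsto (fun t => F t ^ (-(1 / p)) / (-(f t / (p * F t ^ (1 + 1 / p)))))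
      (nhdsWithin 0 (Set.Ioi 0)) (nhds 0) := by
  have hp0 : (0:ℝ) < p := lt_trans one_pos hp
  obtain ⟨m, hm0, hm1, hmM⟩ : ∃ m : ℝ, 0 < m ∧ m ≤ 1 ∧ (m : EReal) < M := by
    have hmin : (0:EReal) < min M 1 := lt_min hM0 (by norm_num)
    obtain ⟨c, hc0, hcm⟩ := exists_between hmin
    have hc1 : c < (1:EReal) := lt_of_lt_of_le hcm (min_le_right _ _)
    have hctop : c ≠ ⊤ := ne_top_of_lt hc1
    have hcbot : c ≠ ⊥ := ne_bot_of_gt hc0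
    have hcoe : (c.toReal : EReal) = c := EReal.coe_toReal hctop hcbot
    refine ⟨c.toReal, ?_, ?_, ?_⟩
    · have h : ((0:ℝ):EReal) < (c.toReal : EReal) := by rw [hcoe]; exact_mod_cast hc0
      exact_mod_cast h
    · have h : (c.toReal : EReal) ≤ ((1:ℝ):EReal) := by rw [hcoe]; exact_mod_cast le_of_lt hc1
      exact_mod_cast h
    · rw [hcoe]; exact lt_of_lt_of_le hcm (min_le_left _ _)
  have hFeq : F = fun u => ∫ τ in (0:ℝ)..u, f τ := funext hF
  have hFd : ∀ t : ℝ, 0 < t → HasDerivAt F (f t) t := by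
    intro t ht
    have hca : ContinuousAt f t := hf_cont.continuousAt (Ioi_mem_nhds ht)
    have hmeas : StronglyMeasurableAtFilter f (nhds t) MeasureTheory.volume :=
      ⟨Ioi 0, Ioi_mem_nhds ht, hf_cont.aestronglyMeasurable measurableSet_Ioi⟩
    have h := intervalIntegral.integral_hasDerivAt_right (hint t ht) hmeas hca
    rw [hFeq]; exact h
  have hFpos : ∀ t : ℝ, 0 < t → 0 < F t := by
    intro t ht
    have ht'0 : 0 < min t m := lt_min ht hm0
    have hpos1 : 0 < ∫ τ in (0:ℝ)..(min t m), f τ := by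
      apply intervalIntegral.intervalIntegral_pos_of_pos_on (hint _ ht'0) _ ht'0
      intro x hx
      refine hf_pos x hx.1 (lt_trans ?_ hmM)
      exact_mod_cast lt_of_lt_of_le hx.2 (min_le_right t m)
    have hint2 : IntervalIntegrable f MeasureTheory.volume (min t m) t :=
      (hint _ ht'0).symm.trans (hint t ht)
    have hpos2 : 0 ≤ ∫ τ in (min t m)..t, f τ := by
      apply intervalIntegral.integral_nonneg (min_le_left t m)
      intro u hu; exact hf_nonneg u (lt_of_lt_of_le ht'0 hu.1)
    have heq : F t = (∫ τ in (0:ℝ)..(min t m), f τ) + ∫ τ in (min t m)..t, f τ := by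
      rw [hF t, intervalIntegral.integral_add_adjacent_intervals (hint _ ht'0) hint2]
    rw [heq]; linarith
  have hFmono : ∀ t s : ℝ, 0 < t → t ≤ s → F t ≤ F s := by
    intro t s ht hts
    have hs : 0 < s := lt_of_lt_of_le ht hts
    have hint2 : IntervalIntegrable f MeasureTheory.volume t s :=
      (hint t ht).symm.trans (hint s hs)
    have hpos2 : 0 ≤ ∫ τ in t..s, f τ := by
      apply intervalIntegral.integral_nonneg hts
      intro u hu; exact hf_nonneg u (lt_of_lt_of_le ht hu.1)
    have heq : F s = F t + ∫ τ in t..s, f τ := by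
      rw [hF t, hF s, intervalIntegral.integral_add_adjacent_intervals (hint t ht) hint2]
    rw [heq]; linarith
  have hF00 : F 0 = 0 := by rw [hF 0, intervalIntegral.integral_same]
  have hFc0 : Tendsto F (nhdsWithin 0 (Ioi 0)) (nhds 0) := by
    have hc := intervalIntegral.continuousOn_primitive_interval' (hint 1 one_pos)
      (Set.left_mem_uIcc (a := (0:ℝ)) (b := 1))
    have hcw := (hc 0 (by rw [Set.uIcc_of_le (zero_le_one : (0:ℝ) ≤ 1)]; exact Set.left_mem_Icc.mpr zero_le_one)).tendsto
    rw [← nhdsWithin_Ioo_eq_nhdsGT one_pos]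
    have hsub : Set.Ioo (0:ℝ) 1 ⊆ Set.uIcc (0:ℝ) 1 := by
      rw [Set.uIcc_of_le (zero_le_one : (0:ℝ) ≤ 1)]; exact Set.Ioo_subset_Icc_self
    have h2 : Tendsto (fun b => ∫ x in (0:ℝ)..b, f x) (nhdsWithin 0 (Ioo 0 1)) (nhds 0) := by
      simpa using hcw.mono_left (nhdsWithin_mono _ hsub)
    rw [hFeq]; exact h2
  have hψcont : ContinuousOn (fun s => F s ^ (-(1/p))) (Set.Ioi 0) := by
    intro t ht
    exact ((hFd t ht).continuousAt.rpow_const (Or.inl (ne_of_gt (hFpos t ht)))).continuousWithinAt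
  have huIcc : ∀ t : ℝ, 0 < t → Set.uIcc (1:ℝ) t ⊆ Set.Ioi 0 := by
    intro t ht x hx
    rcases Set.mem_uIcc.mp hx with h | h
    · exact lt_of_lt_of_le one_pos h.1
    · exact lt_of_lt_of_le ht h.1
  have hφd : ∀ t : ℝ, 0 < t → HasDerivAt φ (F t ^ (-(1/p))) t := by
    intro t ht
    have hii : IntervalIntegrable (fun s => F s ^ (-(1/p))) MeasureTheory.volume 1 t :=
      (hψcont.mono (huIcc t ht)).intervalIntegrable
    have hmeas : StronglyMeasurableAtFilter (fun s => F s ^ (-(1/p))) (nhds t) MeasureTheory.volume :=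
      ⟨Set.Ioi 0, Ioi_mem_nhds ht, hψcont.aestronglyMeasurable measurableSet_Ioi⟩
    have hca : ContinuousAt (fun s => F s ^ (-(1/p))) t := hψcont.continuousAt (Ioi_mem_nhds ht)
    have h := intervalIntegral.integral_hasDerivAt_right hii hmeas hca
    apply h.congr_of_eventuallyEq
    filter_upwards [Ioi_mem_nhds ht] with u hu
    exact hφ u hu
  have hψd : ∀ t : ℝ, 0 < t →
      HasDerivAt (fun s => F s ^ (-(1/p))) (-(f t / (p * F t ^ (1+1/p)))) t := by
    intro t ht
    have hFt := hFpos t ht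
    have h := (hFd t ht).rpow_const (p := -(1/p)) (Or.inl (ne_of_gt hFt))
    convert h using 1
    rw [show (-(1/p) - 1 : ℝ) = -(1+1/p) by ring, Real.rpow_neg hFt.le]
    have hne : F t ^ ((1:ℝ)+1/p) ≠ 0 := ne_of_gt (Real.rpow_pos_of_pos hFt _)
    field_simp
  -- part (ii)
  have hGto0 : Tendsto (fun t => F t ^ ((1:ℝ)/p)) (nhdsWithin 0 (Set.Ioi 0)) (nhds 0) := by
    have hcont : ContinuousAt (fun x : ℝ => x ^ ((1:ℝ)/p)) 0 :=
      Real.continuousAt_rpow_const 0 (1/p) (Or.inr (by positivity))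
    have h := hcont.tendsto.comp hFc0
    simpa [Function.comp_def, one_div, Real.zero_rpow (show p⁻¹ ≠ 0 by positivity)] using h
  have part2 : Tendsto (fun t => F t ^ (-(1/p))) (nhdsWithin 0 (Set.Ioi 0)) atTop := by
    have h1 : Tendsto (fun t => F t ^ ((1:ℝ)/p)) (nhdsWithin 0 (Set.Ioi 0))
        (nhdsWithin 0 (Set.Ioi 0)) := by
      rw [tendsto_nhdsWithin_iff]
      refine ⟨hGto0, ?_⟩
      filter_upwards [self_mem_nhdsWithin] with t ht
      exact Real.rpow_pos_of_pos (hFpos t ht) _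
    have h2 := h1.inv_tendsto_nhdsGT_zero
    apply h2.congr'
    filter_upwards [self_mem_nhdsWithin] with t ht
    simp only [Pi.inv_apply]
    rw [← Real.rpow_neg (hFpos t ht).le]
  -- derivative of G = F^{1/p}
  have hGd : ∀ t : ℝ, 0 < t → HasDerivAt (fun u => F u ^ ((1:ℝ)/p))
      (f t * (1/p) * F t ^ ((1:ℝ)/p - 1)) t :=
    fun t ht => (hFd t ht).rpow_const (Or.inl (ne_of_gt (hFpos t ht)))
  -- F/f → 0
  have hFf0 : Tendsto (fun t => F t / f t) (nhdsWithin 0 (Set.Ioi 0)) (nhds 0) := by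
    have hGm : 0 < F m ^ ((1:ℝ)/p) := Real.rpow_pos_of_pos (hFpos m hm0) _
    set c : ℝ := F m ^ ((1:ℝ)/p) / 2 / m with hcdef
    have hc0 : 0 < c := by positivity
    have hbound : ∀ t : ℝ, 0 < t → t < m → F t ^ ((1:ℝ)/p) ≤ F m ^ ((1:ℝ)/p)/2 →
        F t / f t ≤ (1/(p*c)) * F t ^ ((1:ℝ)/p) := by
      intro t ht htm hGt
      have hFt := hFpos t ht
      have hft : 0 < f t := hf_pos t ht (lt_trans (by exact_mod_cast htm) hmM)
      set g := f t * (1/p) * F t ^ ((1:ℝ)/p - 1) with hgdef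
      have hslope : (F m ^ ((1:ℝ)/p) - F t ^ ((1:ℝ)/p)) / (m - t) ≤ g := by
        have h := hFconc.neg.le_slope_of_hasDerivAt (Set.mem_Ici.mpr ht.le)
          (Set.mem_Ici.mpr hm0.le) htm ((hGd t ht).neg)
        rw [slope_def_field] at h
        simp only [Pi.neg_apply] at h
        have h' : (-(F m ^ ((1:ℝ)/p)) - -(F t ^ ((1:ℝ)/p))) / (m - t)
            = -((F m ^ ((1:ℝ)/p) - F t ^ ((1:ℝ)/p)) / (m - t)) := by ring
        rw [h'] at h
        linarith
      have hgc : c ≤ g := by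
        refine le_trans ?_ hslope
        refine div_le_div₀ (by linarith) (by linarith) (by linarith) (by linarith)
      have hgpos : 0 < g := lt_of_lt_of_le hc0 hgc
      have hEq : F t / f t = F t ^ ((1:ℝ)/p) / (p * g) := by
        have hfg : p * g = f t * F t ^ ((1:ℝ)/p - 1) := by
          rw [hgdef]; field_simp
        rw [hfg, div_eq_div_iff hft.ne'
          (mul_pos hft (Real.rpow_pos_of_pos hFt _)).ne']
        have hkey : F t * F t ^ ((1:ℝ)/p - 1) = F t ^ ((1:ℝ)/p) := by
          nth_rewrite 1 [← Real.rpow_one (F t)]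
          rw [← Real.rpow_add hFt]; norm_num
        rw [← hkey]; ring
      rw [hEq]
      calc F t ^ ((1:ℝ)/p) / (p * g) ≤ F t ^ ((1:ℝ)/p) / (p * c) := by
            apply div_le_div_of_nonneg_left (by positivity) (by positivity)
            exact mul_le_mul_of_nonneg_left hgc hp0.le
        _ = (1/(p*c)) * F t ^ ((1:ℝ)/p) := by ring
    have hlim : Tendsto (fun t => (1/(p*c)) * F t ^ ((1:ℝ)/p))
        (nhdsWithin 0 (Set.Ioi 0)) (nhds 0) := by
      simpa using hGto0.const_mul (1/(p*c))
    apply squeeze_zero' ?_ ?_ hlim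
    · filter_upwards [Ioo_mem_nhdsGT_of_mem (Set.left_mem_Ico.mpr hm0)] with t ht
      exact div_nonneg (hFpos t ht.1).le
        (hf_pos t ht.1 (lt_trans (by exact_mod_cast ht.2) hmM)).le
    · filter_upwards [Ioo_mem_nhdsGT_of_mem (Set.left_mem_Ico.mpr hm0),
        hGto0.eventually_lt_const (show (0:ℝ) < F m ^ ((1:ℝ)/p)/2 by positivity)]
        with t ht hGt
      exact hbound t ht.1 ht.2 hGt.le
  -- part (iv)
  have part4 : Tendsto (fun t => F t ^ (-(1/p)) / (-(f t / (p * F t ^ (1 + 1/p)))))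
      (nhdsWithin 0 (Set.Ioi 0)) (nhds 0) := by
    have h : Tendsto (fun t => -p * (F t / f t)) (nhdsWithin 0 (Set.Ioi 0)) (nhds 0) := by
      simpa using hFf0.const_mul (-p)
    apply h.congr'
    filter_upwards [Ioo_mem_nhdsGT_of_mem (Set.left_mem_Ico.mpr hm0)] with t ht
    have hFt := hFpos t ht.1
    have hft : 0 < f t := hf_pos t ht.1 (lt_trans (by exact_mod_cast ht.2) hmM)
    have hkey : F t ^ (-(1/p)) * F t ^ ((1:ℝ) + 1/p) = F t := by
      rw [← Real.rpow_add hFt]; norm_num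
    rw [div_neg, div_div_eq_mul_div]
    have h2 : F t ^ (-(1/p)) * (p * F t ^ ((1:ℝ) + 1/p)) = p * F t := by
      linear_combination p * hkey
    rw [h2]
    ring
  -- part (iii)
  have part3 : Tendsto (fun t => φ t / F t ^ (-(1 / p))) (nhdsWithin 0 (Set.Ioi 0)) (nhds 0) := by
    have hG1 : (0:ℝ) < F 1 ^ ((1:ℝ)/p) := Real.rpow_pos_of_pos (hFpos 1 one_pos) _
    have key : ∀ t : ℝ, 0 < t → t < 1 →
        ‖φ t / F t ^ (-(1/p))‖ ≤
          2 / (F 1 ^ ((1:ℝ)/p)) ^ ((1:ℝ)/2) * (F t ^ ((1:ℝ)/p)) ^ ((1:ℝ)/2) := by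
      intro t ht ht1
      have hFt := hFpos t ht
      have hGt : (0:ℝ) < F t ^ ((1:ℝ)/p) := Real.rpow_pos_of_pos hFt _
      set C : ℝ := ((F t ^ ((1:ℝ)/p)) ^ ((1:ℝ)/2))⁻¹ * ((F 1 ^ ((1:ℝ)/p)) ^ ((1:ℝ)/2))⁻¹ with hC
      have hCnonneg : 0 ≤ C := by rw [hC]; positivity
      have hψle : ∀ s ∈ Set.Icc t 1, F s ^ (-(1/p)) ≤ C * s ^ (-(1:ℝ)/2) := by
        intro s hs
        have hs0 : 0 < s := lt_of_lt_of_le ht hs.1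
        have hFs := hFpos s hs0
        have hGs : (0:ℝ) < F s ^ ((1:ℝ)/p) := Real.rpow_pos_of_pos hFs _
        have hGs1 : F t ^ ((1:ℝ)/p) ≤ F s ^ ((1:ℝ)/p) :=
          Real.rpow_le_rpow hFt.le (hFmono t s ht hs.1) (by positivity)
        have hGs2 : s * F 1 ^ ((1:ℝ)/p) ≤ F s ^ ((1:ℝ)/p) := by
          have hcc := hFconc.2 (Set.mem_Ici.mpr (zero_le_one : (0:ℝ) ≤ 1))
            (Set.mem_Ici.mpr (le_refl (0:ℝ))) hs0.le
            (by have := hs.2; linarith : (0:ℝ) ≤ 1 - s) (by ring)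
          simp only [smul_eq_mul, mul_one, mul_zero, add_zero] at hcc
          rw [hF00, Real.zero_rpow (ne_of_gt (by positivity : (0:ℝ) < 1/p))] at hcc
          linarith
        have hprod : (F t ^ ((1:ℝ)/p)) ^ ((1:ℝ)/2) * (s * F 1 ^ ((1:ℝ)/p)) ^ ((1:ℝ)/2)
            ≤ F s ^ ((1:ℝ)/p) := by
          have e1 : (F t ^ ((1:ℝ)/p)) ^ ((1:ℝ)/2) ≤ (F s ^ ((1:ℝ)/p)) ^ ((1:ℝ)/2) :=
            Real.rpow_le_rpow hGt.le hGs1 (by norm_num)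
          have e2 : (s * F 1 ^ ((1:ℝ)/p)) ^ ((1:ℝ)/2) ≤ (F s ^ ((1:ℝ)/p)) ^ ((1:ℝ)/2) :=
            Real.rpow_le_rpow (by positivity) hGs2 (by norm_num)
          calc (F t ^ ((1:ℝ)/p)) ^ ((1:ℝ)/2) * (s * F 1 ^ ((1:ℝ)/p)) ^ ((1:ℝ)/2)
              ≤ (F s ^ ((1:ℝ)/p)) ^ ((1:ℝ)/2) * (F s ^ ((1:ℝ)/p)) ^ ((1:ℝ)/2) :=
                mul_le_mul e1 e2 (by positivity) (by positivity)
            _ = F s ^ ((1:ℝ)/p) := by rw [← Real.rpow_add hGs]; norm_num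
        have hinv : F s ^ (-(1/p)) = (F s ^ ((1:ℝ)/p))⁻¹ := Real.rpow_neg hFs.le _
        rw [hinv]
        have hpos2 : (0:ℝ) < (F t ^ ((1:ℝ)/p)) ^ ((1:ℝ)/2) * (s * F 1 ^ ((1:ℝ)/p)) ^ ((1:ℝ)/2) := by
          positivity
        refine le_trans (inv_anti₀ hpos2 hprod) (le_of_eq ?_)
        rw [hC, Real.mul_rpow hs0.le hG1.le,
          show (-(1:ℝ)/2) = -((1:ℝ)/2) by ring, Real.rpow_neg hs0.le]
        ring
      have hψint : IntervalIntegrable (fun s => F s ^ (-(1/p))) MeasureTheory.volume t 1 := by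
        apply (hψcont.mono ?_).intervalIntegrable
        rw [Set.uIcc_of_le ht1.le]
        intro x hx; exact lt_of_lt_of_le ht hx.1
      have hBint : IntervalIntegrable (fun s => C * s ^ (-(1:ℝ)/2)) MeasureTheory.volume t 1 := by
        apply ContinuousOn.intervalIntegrable
        apply ContinuousOn.mul continuousOn_const
        intro x hx
        have hx0 : 0 < x := by
          rw [Set.uIcc_of_le ht1.le] at hx; exact lt_of_lt_of_le ht hx.1
        exact (Real.continuousAt_rpow_const x _ (Or.inl hx0.ne')).continuousWithinAt
      have hintle : (∫ s in t..1, F s ^ (-(1/p))) ≤ ∫ s in t..1, C * s ^ (-(1:ℝ)/2) :=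
        intervalIntegral.integral_mono_on ht1.le hψint hBint hψle
      have h0 : (0:ℝ) ∉ Set.uIcc t 1 := by
        rw [Set.uIcc_of_le ht1.le]
        exact fun h => absurd h.1 (not_le.mpr ht)
      have hCval : (∫ s in t..1, C * s ^ (-(1:ℝ)/2)) = C * ((1 - t ^ ((1:ℝ)/2)) / ((1:ℝ)/2)) := by
        rw [intervalIntegral.integral_const_mul]
        congr 1
        rw [integral_rpow (Or.inr ⟨by norm_num, h0⟩)]
        norm_num
      have hφt : φ t = -∫ s in t..1, F s ^ (-(1/p)) := by
        rw [hφ t ht, intervalIntegral.integral_symm]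
      have hintnonneg : 0 ≤ ∫ s in t..1, F s ^ (-(1/p)) := by
        apply intervalIntegral.integral_nonneg ht1.le
        intro u hu
        exact (Real.rpow_pos_of_pos (hFpos u (lt_of_lt_of_le ht hu.1)) _).le
      have hdiv : φ t / F t ^ (-(1/p)) = φ t * F t ^ ((1:ℝ)/p) := by
        rw [Real.rpow_neg hFt.le, div_eq_mul_inv, inv_inv]
      have hkey2 : ((F t ^ ((1:ℝ)/p)) ^ ((1:ℝ)/2))⁻¹ * F t ^ ((1:ℝ)/p)
          = (F t ^ ((1:ℝ)/p)) ^ ((1:ℝ)/2) := by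
        rw [← Real.rpow_neg hGt.le]
        nth_rewrite 2 [← Real.rpow_one (F t ^ ((1:ℝ)/p))]
        rw [← Real.rpow_add hGt]
        norm_num
      rw [hdiv, hφt, Real.norm_eq_abs, neg_mul, abs_neg,
        abs_of_nonneg (mul_nonneg hintnonneg hGt.le)]
      calc (∫ s in t..1, F s ^ (-(1/p))) * F t ^ ((1:ℝ)/p)
          ≤ (C * ((1 - t ^ ((1:ℝ)/2)) / ((1:ℝ)/2))) * F t ^ ((1:ℝ)/p) := by
            apply mul_le_mul_of_nonneg_right _ hGt.le
            rw [← hCval]; exact hintle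
        _ = (2 * (1 - t ^ ((1:ℝ)/2)) / (F 1 ^ ((1:ℝ)/p)) ^ ((1:ℝ)/2))
              * (((F t ^ ((1:ℝ)/p)) ^ ((1:ℝ)/2))⁻¹ * F t ^ ((1:ℝ)/p)) := by
            rw [hC]; ring
        _ = (2 * (1 - t ^ ((1:ℝ)/2)) / (F 1 ^ ((1:ℝ)/p)) ^ ((1:ℝ)/2))
              * (F t ^ ((1:ℝ)/p)) ^ ((1:ℝ)/2) := by rw [hkey2]
        _ ≤ (2 * 1 / (F 1 ^ ((1:ℝ)/p)) ^ ((1:ℝ)/2)) * (F t ^ ((1:ℝ)/p)) ^ ((1:ℝ)/2) := by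
            gcongr
            linarith [Real.rpow_nonneg ht.le ((1:ℝ)/2)]
        _ = 2 / (F 1 ^ ((1:ℝ)/p)) ^ ((1:ℝ)/2) * (F t ^ ((1:ℝ)/p)) ^ ((1:ℝ)/2) := by norm_num
    have hhalf : Tendsto (fun t => 2 / (F 1 ^ ((1:ℝ)/p)) ^ ((1:ℝ)/2) * (F t ^ ((1:ℝ)/p)) ^ ((1:ℝ)/2))
        (nhdsWithin 0 (Set.Ioi 0)) (nhds 0) := by
      have hc2 : ContinuousAt (fun x : ℝ => x ^ ((1:ℝ)/2)) 0 :=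
        Real.continuousAt_rpow_const 0 _ (Or.inr (by norm_num))
      have h := hc2.tendsto.comp hGto0
      have h2 : Tendsto (fun t => (F t ^ ((1:ℝ)/p)) ^ ((1:ℝ)/2))
          (nhdsWithin 0 (Set.Ioi 0)) (nhds 0) := by
        simpa [Function.comp_def, one_div, Real.zero_rpow (show (2:ℝ)⁻¹ ≠ 0 by norm_num)] using h
      simpa using h2.const_mul (2 / (F 1 ^ ((1:ℝ)/p)) ^ ((1:ℝ)/2))
    apply squeeze_zero_norm' ?_ hhalf
    filter_upwards [Ioo_mem_nhdsGT_of_mem (Set.left_mem_Ico.mpr one_pos)] with t ht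
    exact key t ht.1 ht.2
  -- part (i)
  have part1 : ∀ t : ℝ, 0 < t → (t : EReal) < M →
      HasDerivAt φ (F t ^ (-(1 / p))) t ∧ 0 < F t ^ (-(1 / p)) ∧
      HasDerivAt (fun s => F s ^ (-(1 / p))) (-(f t / (p * F t ^ (1 + 1 / p)))) t ∧
      -(f t / (p * F t ^ (1 + 1 / p))) < 0 := by
    intro t ht htM
    refine ⟨hφd t ht, Real.rpow_pos_of_pos (hFpos t ht) _, hψd t ht, ?_⟩
    have hft := hf_pos t ht htM
    have hFt := hFpos t ht
    have hq : 0 < f t / (p * F t ^ ((1:ℝ) + 1/p)) :=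
      div_pos hft (mul_pos hp0 (Real.rpow_pos_of_pos hFt _))
    linarith
  exact ⟨part1, part2, part3, part4⟩
end

section
/- Let p > 1, let f : (0, M) → (0, ∞) be continuous, where M ∈ (0, ∞], such that F(t) := ∫₀^t f(τ) dτ is finite for each t ∈ (0, M). Suppose F^{1/p} is concave on (0, M) with F(0⁺) = 0 and F/f is convex on (0, M). Then lim_{t → 0⁺} F(t)/f(t) = 0. -/
open Set Filter intervalIntegral

/-- Let `p > 1`, `M ∈ (0,∞]` (as an `EReal`), and `f : (0,M) → (0,∞)`
continuous, such that `F t = ∫ τ in 0..t, f τ` is finite for each `t ∈ (0,M)`.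
Suppose `F^{1/p}` is concave on `(0,M)` with `F(0⁺) = 0` and `F/f` convex on `(0,M)`.
Then `F t / f t → 0` as `t → 0⁺`. -/
theorem stmt_6 (p : ℝ) (hp : 1 < p) (M : EReal) (hM0 : 0 < M)
    (f : ℝ → ℝ)
    (hf_cont : ContinuousOn f {t : ℝ | 0 < t ∧ (t : EReal) < M})
    (hf_pos : ∀ t : ℝ, 0 < t → (t : EReal) < M → 0 < f t)
    (hint : ∀ t : ℝ, 0 < t → (t : EReal) < M → IntervalIntegrable f MeasureTheory.volume 0 t)
    (F : ℝ → ℝ) (hF : ∀ t : ℝ, 0 < t → (t : EReal) < M → F t = ∫ τ in (0:ℝ)..t, f τ)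
    (hF0 : Tendsto F (nhdsWithin 0 (Set.Ioi 0)) (nhds 0))
    (hFconc : ConcaveOn ℝ {t : ℝ | 0 < t ∧ (t : EReal) < M} (fun t => F t ^ (1 / p)))
    (hFf : ConvexOn ℝ {t : ℝ | 0 < t ∧ (t : EReal) < M} (fun t => F t / f t)) :
    Tendsto (fun t => F t / f t) (nhdsWithin 0 (Set.Ioi 0)) (nhds 0) := by
  set S : Set ℝ := {t : ℝ | 0 < t ∧ (t : EReal) < M} with hS
  -- S is open
  have hSopen : IsOpen S := by
    have : S = Real.toEReal ⁻¹' (Set.Ioo 0 M) := by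
      ext t; simp [hS, Set.mem_Ioo, EReal.coe_pos]
    rw [this]
    exact isOpen_Ioo.preimage continuous_coe_real_ereal
  -- pick a real b with 0 < b < M
  obtain ⟨b, hb0', hbM⟩ := EReal.exists_between_coe_real hM0
  have hb0 : (0:ℝ) < b := by exact_mod_cast hb0'
  have hmemS : ∀ t : ℝ, 0 < t → t ≤ b → t ∈ S := by
    intro t ht htb
    exact ⟨ht, lt_of_le_of_lt (EReal.coe_le_coe_iff.2 htb) hbM⟩
  -- F positive on S
  have hFpos : ∀ t ∈ S, 0 < F t := by
    intro t ht
    rw [hF t ht.1 ht.2]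
    refine intervalIntegral_pos_of_pos_on (hint t ht.1 ht.2) ?_ ht.1
    intro x hx
    exact hf_pos x hx.1 (lt_trans (EReal.coe_lt_coe_iff.2 hx.2) ht.2)
  -- F has derivative f t at each t ∈ S
  have hderiv : ∀ t ∈ S, HasDerivAt F (f t) t := by
    intro t ht
    have hG : HasDerivAt (fun u => ∫ τ in (0:ℝ)..u, f τ) (f t) t :=
      intervalIntegral.integral_hasDerivAt_right (hint t ht.1 ht.2)
        (hf_cont.stronglyMeasurableAtFilter hSopen t ht)
        (hf_cont.continuousAt (hSopen.mem_nhds ht))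
    refine hG.congr_of_eventuallyEq ?_
    filter_upwards [hSopen.mem_nhds ht] with u hu
    exact hF u hu.1 hu.2
  -- positivity of F/f on S
  have hHpos : ∀ t ∈ S, 0 < F t / f t := fun t ht =>
    div_pos (hFpos t ht) (hf_pos t ht.1 ht.2)
  rw [tendsto_order]
  constructor
  · intro c hc
    filter_upwards [Ioo_mem_nhdsGT_of_mem (Set.mem_Ico.2 ⟨le_rfl, hb0⟩)] with t ht
    exact lt_trans hc (hHpos t (hmemS t ht.1 ht.2.le))
  · intro ε hε
    by_contra hcon
    have hfreq : ∃ᶠ t in nhdsWithin 0 (Set.Ioi 0), ε ≤ F t / f t := by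
      simpa [not_eventually, not_lt] using hcon
    set B := F b / f b with hBdef
    have hbS : b ∈ S := hmemS b hb0 le_rfl
    have hB : 0 < B := hHpos b hbS
    set δ : ℝ := min (b / 2) (ε * b / (4 * B)) with hδdef
    have hδpos : 0 < δ := lt_min (by positivity) (by positivity)
    obtain ⟨t₀, hεt₀, ht₀0, ht₀δ⟩ :
        ∃ t₀, ε ≤ F t₀ / f t₀ ∧ 0 < t₀ ∧ t₀ < δ := by
      have := (hfreq.and_eventually
        (Ioo_mem_nhdsGT_of_mem (Set.mem_Ico.2 ⟨le_rfl, hδpos⟩))).exists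
      obtain ⟨t₀, h1, h2, h3⟩ := this
      exact ⟨t₀, h1, h2, h3⟩
    have ht₀b2 : t₀ ≤ b / 2 := le_trans ht₀δ.le (min_le_left _ _)
    have ht₀b : t₀ < b := lt_of_le_of_lt ht₀b2 (by linarith)
    have ht₀B : t₀ ≤ ε * b / (4 * B) := le_trans ht₀δ.le (min_le_right _ _)
    have ht₀S : t₀ ∈ S := hmemS t₀ ht₀0 ht₀b.le
    -- lower bound ε/2 ≤ F t / f t for all t ∈ (0, t₀)
    have hlow : ∀ t, 0 < t → t < t₀ → ε / 2 ≤ F t / f t := by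
      intro t ht htt₀
      have htS : t ∈ S := hmemS t ht (le_trans htt₀.le ht₀b.le)
      have hbt : (0:ℝ) < b - t := by linarith
      set θ : ℝ := (b - t₀) / (b - t) with hθdef
      have hθ0 : 0 < θ := div_pos (by linarith) hbt
      have hθ1 : θ ≤ 1 := by
        rw [div_le_one hbt]; linarith
      have hcomb : θ * t + (1 - θ) * b = t₀ := by
        rw [hθdef, div_mul_eq_mul_div, one_sub_div (ne_of_gt hbt), div_mul_eq_mul_div,
          ← add_div, div_eq_iff (ne_of_gt hbt)]
        ring
      have hconv := hFf.2 htS hbS hθ0.le (by linarith : (0:ℝ) ≤ 1 - θ)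
        (by ring : θ + (1 - θ) = 1)
      simp only [smul_eq_mul] at hconv
      rw [hcomb] at hconv
      -- (1-θ) * B ≤ ε/2
      have h1θ : 1 - θ ≤ 2 * t₀ / b := by
        have h1 : 1 - θ = (t₀ - t) / (b - t) := by
          rw [hθdef, one_sub_div (ne_of_gt hbt)]; congr 1; ring
        rw [h1]
        have hb2 : b / 2 ≤ b - t := by linarith
        calc (t₀ - t) / (b - t) ≤ t₀ / (b / 2) := by
              apply div_le_div₀ (le_of_lt ht₀0) (by linarith) (by positivity) hb2
          _ = 2 * t₀ / b := by field_simp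
      have hθB : (1 - θ) * B ≤ ε / 2 := by
        have h2 : (1 - θ) * B ≤ (2 * t₀ / b) * B :=
          mul_le_mul_of_nonneg_right h1θ hB.le
        have h3 : (2 * t₀ / b) * B ≤ ε / 2 := by
          rw [div_mul_eq_mul_div, div_le_div_iff₀ hb0 (by norm_num : (0:ℝ) < 2)]
          have := mul_le_mul_of_nonneg_right ht₀B (by positivity : (0:ℝ) ≤ 4 * B)
          rw [div_mul_cancel₀ _ (by positivity : (4:ℝ) * B ≠ 0)] at this
          nlinarith
        linarith
      -- θ * (F t / f t) ≥ ε - (1-θ)B ≥ ε/2, and θ ≤ 1, F t / f t ≥ 0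
      have hHt : 0 ≤ F t / f t := (hHpos t htS).le
      nlinarith [hεt₀, hconv, hθB, mul_le_mul_of_nonneg_right hθ1 hHt]
    -- hence f u ≤ (2/ε) * F u on (0, t₀]
    have hfle : ∀ u, 0 < u → u ≤ t₀ → f u ≤ (2 / ε) * F u := by
      intro u hu hut₀
      have huS : u ∈ S := hmemS u hu (le_trans hut₀ ht₀b.le)
      have hfu : 0 < f u := hf_pos u huS.1 huS.2
      have h : ε / 2 ≤ F u / f u := by
        rcases lt_or_eq_of_le hut₀ with h | h
        · exact hlow u hu h
        · rw [h]; linarith [hεt₀]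
      have h' : ε / 2 * f u ≤ F u := (le_div_iff₀ hfu).1 h
      calc f u = (2 / ε) * (ε / 2 * f u) := by field_simp
        _ ≤ (2 / ε) * F u := mul_le_mul_of_nonneg_left h' (by positivity)
    -- Gronwall: ψ = F * exp(-(2/ε)u) is antitone on Ioc 0 t₀
    set k : ℝ := 2 / ε with hkdef
    have hk : 0 < k := by positivity
    set ψ : ℝ → ℝ := fun u => F u * Real.exp (-(k * u)) with hψdef
    have hψderiv : ∀ u ∈ Set.Ioc 0 t₀, HasDerivAt ψ
        (f u * Real.exp (-(k * u)) + F u * (Real.exp (-(k * u)) * (-k))) u := by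
      intro u hu
      have huS : u ∈ S := hmemS u hu.1 (le_trans hu.2 ht₀b.le)
      have h1 : HasDerivAt (fun u : ℝ => Real.exp (-(k * u))) (Real.exp (-(k * u)) * (-k)) u := by
        have h2 : HasDerivAt (fun u : ℝ => -(k * u)) (-k) u := by
          have h3 := ((hasDerivAt_id u).const_mul k).neg; rw [mul_one] at h3; exact h3
        exact h2.exp
      exact (hderiv u huS).mul h1
    have hanti : AntitoneOn ψ (Set.Ioc 0 t₀) := by
      apply antitoneOn_of_deriv_nonpos (convex_Ioc 0 t₀)
      · intro u hu
        exact ((hψderiv u hu).continuousAt).continuousWithinAt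
      · intro u hu
        rw [interior_Ioc] at hu
        exact ((hψderiv u ⟨hu.1, hu.2.le⟩).differentiableAt).differentiableWithinAt
      · intro u hu
        rw [interior_Ioc] at hu
        rw [(hψderiv u ⟨hu.1, hu.2.le⟩).deriv]
        have h1 := hfle u hu.1 hu.2.le
        have hexp : 0 < Real.exp (-(k * u)) := Real.exp_pos _
        nlinarith
    -- hence F t ≥ c := F t₀ * exp(-k t₀) > 0 on (0, t₀]
    set c : ℝ := F t₀ * Real.exp (-(k * t₀)) with hcdef
    have hc : 0 < c := mul_pos (hFpos t₀ ht₀S) (Real.exp_pos _)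
    have hFlb : ∀ t, 0 < t → t ≤ t₀ → c ≤ F t := by
      intro t ht htt₀
      have h := hanti (Set.mem_Ioc.2 ⟨ht, htt₀⟩) (Set.mem_Ioc.2 ⟨ht₀0, le_rfl⟩) htt₀
      -- ψ t₀ ≤ ψ t, i.e. c ≤ F t * exp(-k t)
      have hexp1 : Real.exp (-(k * t)) ≤ 1 := by
        apply Real.exp_le_one_iff.2
        nlinarith
      have hFt : 0 ≤ F t := (hFpos t (hmemS t ht (le_trans htt₀ ht₀b.le))).le
      calc c ≤ F t * Real.exp (-(k * t)) := h
        _ ≤ F t * 1 := mul_le_mul_of_nonneg_left hexp1 hFt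
        _ = F t := mul_one _
    -- contradiction with F → 0
    have hev : ∀ᶠ t in nhdsWithin 0 (Set.Ioi 0), F t < c := by
      exact hF0.eventually (gt_mem_nhds hc)
    have hev2 : ∀ᶠ t in nhdsWithin 0 (Set.Ioi 0),
        t ∈ Set.Ioo (0:ℝ) t₀ := Ioo_mem_nhdsGT_of_mem (Set.mem_Ico.2 ⟨le_rfl, ht₀0⟩)
    obtain ⟨t, h1, h2⟩ := (hev.and hev2).exists
    exact absurd (hFlb t h2.1 h2.2.le) (not_le.2 h1)
end

section
/- Let p ≥ 1, let f : [0, ∞) → [0, ∞) be continuous, and set F(t) = ∫₀^t f(τ) dτ. If t ↦ F(t)^{1/p} is concave on [0, ∞), then there exists a constant C > 0 such that f(t) ≤ C · (1 + t^{p-1}) for all t ≥ 0. -/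
open intervalIntegral

lemma aux_rpow_sub_rpow_le (p : ℝ) (hp : 1 ≤ p) {a b : ℝ} (ha : 0 ≤ a) (hab : a ≤ b) :
    b ^ p - a ^ p ≤ p * b ^ (p - 1) * (b - a) := by
  rcases eq_or_lt_of_le hab with rfl | hab'
  · simp
  · have hcont : ContinuousOn (fun x : ℝ => x ^ p) (Set.Icc a b) := fun x _ =>
      (Real.hasDerivAt_rpow_const (x := x) (Or.inr hp)).continuousAt.continuousWithinAt
    obtain ⟨c, hc, hceq⟩ := exists_hasDerivAt_eq_slope (fun x : ℝ => x ^ p)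
      (fun x => p * x ^ (p - 1)) hab' hcont
      (fun x _ => Real.hasDerivAt_rpow_const (Or.inr hp))
    have hc0 : 0 ≤ c := le_of_lt (lt_of_le_of_lt ha hc.1)
    have hcb : c ^ (p - 1) ≤ b ^ (p - 1) :=
      Real.rpow_le_rpow hc0 hc.2.le (by linarith)
    have hba : 0 < b - a := by linarith
    have : b ^ p - a ^ p = p * c ^ (p - 1) * (b - a) := by
      field_simp at hceq
      linarith [hceq]
    rw [this]
    have hp0 : (0:ℝ) < p := by linarith
    have h5 := mul_le_mul_of_nonneg_right hcb hba.le
    nlinarith [h5]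

/-- Let `p ≥ 1`, `f : [0,∞) → [0,∞)` continuous, and `F t = ∫ τ in 0..t, f τ`.
If `t ↦ F t ^ (1/p)` is concave on `[0,∞)`, then there is `C > 0` with
`f t ≤ C * (1 + t ^ (p-1))` for all `t ≥ 0`. -/
theorem stmt_8 (p : ℝ) (hp : 1 ≤ p) (f : ℝ → ℝ)
    (hf_cont : ContinuousOn f (Set.Ici 0))
    (hf_nonneg : ∀ t ∈ Set.Ici (0:ℝ), 0 ≤ f t)
    (F : ℝ → ℝ) (hF : ∀ t, F t = ∫ τ in (0:ℝ)..t, f τ)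
    (hFconc : ConcaveOn ℝ (Set.Ici 0) (fun t => F t ^ (1 / p))) :
    ∃ C > (0:ℝ), ∀ t ≥ (0:ℝ), f t ≤ C * (1 + t ^ (p - 1)) := by
  have hp0 : (0:ℝ) < p := by linarith
  -- extend f continuously to ℝ
  set g : ℝ → ℝ := fun s => f (max s 0) with hg_def
  have hg_cont : Continuous g :=
    hf_cont.comp_continuous (continuous_id.max continuous_const)
      (fun x => Set.mem_Ici.mpr (le_max_right _ _))
  have hg_nonneg : ∀ s, 0 ≤ g s := fun s => hf_nonneg _ (Set.mem_Ici.mpr (le_max_right _ _))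
  set G : ℝ → ℝ := fun u => ∫ τ in (0:ℝ)..u, g τ with hG_def
  have hFg : ∀ t ∈ Set.Ici (0:ℝ), F t = G t := by
    intro t ht
    rw [hF]
    apply intervalIntegral.integral_congr
    intro x hx
    rw [Set.uIcc_of_le ht] at hx
    simp [hg_def, max_eq_left hx.1]
  have hGderiv : ∀ t : ℝ, HasDerivAt G (g t) t := fun t =>
    intervalIntegral.integral_hasDerivAt_right (hg_cont.intervalIntegrable _ _)
      (hg_cont.stronglyMeasurableAtFilter _ _) hg_cont.continuousAt
  have hGmono : Monotone G := by
    apply monotone_of_deriv_nonneg (fun t => (hGderiv t).differentiableAt)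
    intro t; rw [(hGderiv t).deriv]; exact hg_nonneg t
  have hG0 : G 0 = 0 := by simp [hG_def]
  have hFnonneg : ∀ t ∈ Set.Ici (0:ℝ), 0 ≤ F t := by
    intro t ht
    rw [hFg t ht, ← hG0]
    exact hGmono ht
  set φ : ℝ → ℝ := fun t => F t ^ (1 / p) with hφ_def
  have hF0 : F 0 = 0 := by rw [hF]; simp
  have hφ0 : φ 0 = 0 := by
    simp only [hφ_def, hF0]
    exact Real.zero_rpow (by positivity)
  have hφnonneg : ∀ t ∈ Set.Ici (0:ℝ), 0 ≤ φ t := fun t ht =>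
    Real.rpow_nonneg (hFnonneg t ht) _
  have hφpow : ∀ t ∈ Set.Ici (0:ℝ), φ t ^ p = F t := by
    intro t ht
    rw [hφ_def, ← Real.rpow_mul (hFnonneg t ht), one_div,
      inv_mul_cancel₀ (ne_of_gt hp0), Real.rpow_one]
  -- φ s ≤ s * φ 1 for s ≥ 1
  have hφle : ∀ s ≥ (1:ℝ), φ s ≤ s * φ 1 := by
    intro s hs
    have hs0 : (0:ℝ) < s := by linarith
    have key := hFconc.2 (Set.self_mem_Ici) (show s ∈ Set.Ici (0:ℝ) by
      exact le_of_lt hs0) (show (0:ℝ) ≤ 1 - 1/s by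
        have : 1/s ≤ 1 := by rw [div_le_one hs0]; linarith
        linarith) (show (0:ℝ) ≤ 1/s by positivity) (by ring)
    simp only [smul_eq_mul, mul_zero, zero_add] at key
    have h1 : (1 - 1/s) * φ 0 + 1/s * φ s ≤ φ (1/s * s) := key
    rw [hφ0, mul_zero, zero_add, one_div, inv_mul_cancel₀ (ne_of_gt hs0)] at h1
    calc φ s = s * (1/s * φ s) := by field_simp
    _ ≤ s * φ 1 := by
        apply mul_le_mul_of_nonneg_left _ (le_of_lt hs0)
        rw [one_div]; exact h1
  set K : ℝ := p * 2 ^ (p - 1) * F 1 with hK_def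
  have hF1 : 0 ≤ F 1 := hFnonneg 1 (by norm_num)
  have hφ1 : 0 ≤ φ 1 := hφnonneg 1 (by norm_num)
  -- key pointwise bound for t ≥ 1
  have hkey : ∀ t ≥ (1:ℝ), f t ≤ K * t ^ (p - 1) := by
    intro t ht
    have ht0 : (0:ℝ) < t := by linarith
    have hmem : Set.Ici (0:ℝ) ∈ nhds t := Ici_mem_nhds ht0
    have hFG : F =ᶠ[nhds t] G := Filter.eventuallyEq_of_mem hmem hFg
    have hd : HasDerivAt F (f t) t := by
      have := (hGderiv t).congr_of_eventuallyEq hFG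
      simpa [hg_def, max_eq_left ht0.le] using this
    have htend : Filter.Tendsto (slope F t) (nhdsWithin t (Set.Ioi t)) (nhds (f t)) :=
      (hasDerivAt_iff_tendsto_slope.mp hd).mono_left
        (nhdsWithin_mono _ (fun x hx => ne_of_gt hx))
    refine le_of_tendsto htend ?_
    filter_upwards [Ioc_mem_nhdsGT_of_mem ⟨le_refl t, lt_add_one t⟩] with u hu
    have htu : t < u := hu.1
    have hu0 : (0:ℝ) ≤ u := by linarith
    have hFtu : F t ≤ F u := by
      rw [hFg t ht0.le, hFg u hu0]; exact hGmono htu.le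
    have hφtu : φ t ≤ φ u := Real.rpow_le_rpow (hFnonneg t ht0.le) hFtu (by positivity)
    -- slope of φ
    have hslope : (φ u - φ t) / (u - t) ≤ φ t / t := by
      have := hFconc.slope_anti_adjacent (Set.self_mem_Ici)
        (show u ∈ Set.Ici (0:ℝ) from hu0) ht0 htu
      simpa [hφ0] using this
    have hdiff : φ u - φ t ≤ (u - t) * (φ t / t) := by
      rw [div_le_iff₀ (by linarith : (0:ℝ) < u - t)] at hslope
      linarith [hslope]
    have hrpow : F u - F t ≤ p * φ u ^ (p - 1) * (φ u - φ t) := by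
      have := aux_rpow_sub_rpow_le p hp (hφnonneg t ht0.le) hφtu
      rwa [hφpow t ht0.le, hφpow u hu0] at this
    have hφu_nonneg : 0 ≤ φ u := hφnonneg u hu0
    have hφu_le : φ u ≤ 2 * t * φ 1 := by
      calc φ u ≤ u * φ 1 := hφle u (by linarith)
      _ ≤ 2 * t * φ 1 := by
          apply mul_le_mul_of_nonneg_right _ hφ1
          linarith [hu.2]
    have hφt_div : φ t / t ≤ φ 1 := by
      rw [div_le_iff₀ ht0]
      calc φ t ≤ t * φ 1 := hφle t ht
      _ = φ 1 * t := by ring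
    have hslope_le : slope F t u ≤ p * φ u ^ (p - 1) * (φ t / t) := by
      rw [slope_def_field]
      rw [div_le_iff₀ (by linarith : (0:ℝ) < u - t)]
      have h1 : p * φ u ^ (p - 1) * (φ u - φ t) ≤
          p * φ u ^ (p - 1) * ((u - t) * (φ t / t)) := by
        apply mul_le_mul_of_nonneg_left hdiff
        positivity
      calc F u - F t ≤ p * φ u ^ (p - 1) * (φ u - φ t) := hrpow
      _ ≤ p * φ u ^ (p - 1) * ((u - t) * (φ t / t)) := h1
      _ = p * φ u ^ (p - 1) * (φ t / t) * (u - t) := by ring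
    refine hslope_le.trans ?_
    -- p * φ u ^ (p-1) * (φ t / t) ≤ K * t ^ (p-1)
    have hφt_div_nonneg : 0 ≤ φ t / t := div_nonneg (hφnonneg t ht0.le) ht0.le
    have h2 : φ u ^ (p - 1) ≤ (2 * t * φ 1) ^ (p - 1) :=
      Real.rpow_le_rpow hφu_nonneg hφu_le (by linarith)
    have h3 : (2 * t * φ 1) ^ (p - 1) = 2 ^ (p - 1) * t ^ (p - 1) * φ 1 ^ (p - 1) := by
      rw [Real.mul_rpow (by positivity) hφ1, Real.mul_rpow (by norm_num) ht0.le]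
    have h4 : φ 1 ^ (p - 1) * φ 1 = F 1 := by
      have e1 : φ 1 ^ (p - 1) * φ 1 ^ (1:ℝ) = φ 1 ^ (p - 1 + 1) :=
        (Real.rpow_add' hφ1 (by intro h; apply hp0.ne'; linarith)).symm
      rw [Real.rpow_one] at e1
      rw [e1, show p - 1 + 1 = p by ring]
      exact hφpow 1 (by norm_num)
    calc p * φ u ^ (p - 1) * (φ t / t)
        ≤ p * ((2:ℝ) ^ (p - 1) * t ^ (p - 1) * φ 1 ^ (p - 1)) * φ 1 := by
          apply mul_le_mul
          · apply mul_le_mul_of_nonneg_left _ hp0.le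
            rw [← h3]; exact h2
          · exact hφt_div
          · exact hφt_div_nonneg
          · positivity
    _ = K * t ^ (p - 1) := by rw [hK_def, ← h4]; ring
  -- bound on [0,1]
  obtain ⟨x0, hx0, hM⟩ := isCompact_Icc.exists_isMaxOn
    (Set.nonempty_Icc.mpr (by norm_num : (0:ℝ) ≤ 1))
    (hf_cont.mono (fun x (hx : x ∈ Set.Icc (0:ℝ) 1) => hx.1))
  set M : ℝ := f x0 with hM_def
  have hM0 : 0 ≤ M := hf_nonneg x0 hx0.1
  have hK0 : 0 ≤ K := by
    have : (0:ℝ) < 2 ^ (p - 1) := by positivity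
    positivity
  refine ⟨M + K + 1, by linarith, ?_⟩
  intro t ht
  have htp : 0 ≤ t ^ (p - 1) := Real.rpow_nonneg ht _
  rcases le_total t 1 with h1 | h1
  · have : f t ≤ M := hM (Set.mem_Icc.mpr ⟨ht, h1⟩)
    nlinarith [htp]
  · have : f t ≤ K * t ^ (p - 1) := hkey t h1
    nlinarith [htp]
end

section
/- Let F(t) = t · log(1 + t) for t ≥ 0. Then the function t ↦ F(t)^{1/2} is concave on [0, ∞). -/
lemma sqrt_mul_add_le (p q r s : ℝ) (hp : 0 ≤ p) (hq : 0 ≤ q) (hr : 0 ≤ r) (hs : 0 ≤ s) :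
    Real.sqrt (p * r) + Real.sqrt (q * s) ≤ Real.sqrt ((p + q) * (r + s)) := by
  rw [show Real.sqrt (p*r) + Real.sqrt (q*s)
      = Real.sqrt ((Real.sqrt (p*r) + Real.sqrt (q*s))^2) from
    (Real.sqrt_sq (by positivity)).symm]
  apply Real.sqrt_le_sqrt
  have h1 : Real.sqrt (p*r) ^ 2 = p*r := Real.sq_sqrt (by positivity)
  have h2 : Real.sqrt (q*s) ^ 2 = q*s := Real.sq_sqrt (by positivity)
  have hu : Real.sqrt (p*s) ^ 2 = p*s := Real.sq_sqrt (by positivity)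
  have hv : Real.sqrt (q*r) ^ 2 = q*r := Real.sq_sqrt (by positivity)
  have h3 : Real.sqrt (p*r) * Real.sqrt (q*s) = Real.sqrt (p*s) * Real.sqrt (q*r) := by
    rw [← Real.sqrt_mul (by positivity), ← Real.sqrt_mul (by positivity)]
    ring_nf
  nlinarith [sq_nonneg (Real.sqrt (p*s) - Real.sqrt (q*r)), Real.sqrt_nonneg (p*r),
    Real.sqrt_nonneg (q*s)]

/-- For `F t = t * log (1 + t)`, the function `t ↦ F t ^ (1/2)` is concave
on `[0,∞)`. -/
theorem stmt_9 :
    ConcaveOn ℝ (Set.Ici 0) (fun t : ℝ => (t * Real.log (1 + t)) ^ ((1:ℝ) / 2)) := by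
  simp only [← Real.sqrt_eq_rpow]
  refine ⟨convex_Ici 0, ?_⟩
  intro x hx y hy a b ha hb hab
  simp only [smul_eq_mul]
  have hx0 : (0:ℝ) ≤ x := hx
  have hy0 : (0:ℝ) ≤ y := hy
  set Lx := Real.log (1 + x) with hLxdef
  set Ly := Real.log (1 + y) with hLydef
  have hLx : 0 ≤ Lx := Real.log_nonneg (by linarith)
  have hLy : 0 ≤ Ly := Real.log_nonneg (by linarith)
  have hlog : a * Lx + b * Ly ≤ Real.log (1 + (a * x + b * y)) := by
    have h := strictConcaveOn_log_Ioi.concaveOn.2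
      (show (1:ℝ) + x ∈ Set.Ioi (0:ℝ) by simp; linarith)
      (show (1:ℝ) + y ∈ Set.Ioi (0:ℝ) by simp; linarith) ha hb hab
    simp only [smul_eq_mul] at h
    have : a * (1 + x) + b * (1 + y) = 1 + (a * x + b * y) := by
      have : a + b = 1 := hab; ring_nf; linarith [hab]
    rw [this] at h
    linarith
  have key : a * Real.sqrt (x * Lx) + b * Real.sqrt (y * Ly)
      ≤ Real.sqrt ((a * x + b * y) * Real.log (1 + (a * x + b * y))) := by
    have e1 : a * Real.sqrt (x * Lx) = Real.sqrt ((a * x) * (a * Lx)) := by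
      rw [show (a * x) * (a * Lx) = a ^ 2 * (x * Lx) by ring,
        Real.sqrt_mul (sq_nonneg a) (x * Lx), Real.sqrt_sq ha]
    have e2 : b * Real.sqrt (y * Ly) = Real.sqrt ((b * y) * (b * Ly)) := by
      rw [show (b * y) * (b * Ly) = b ^ 2 * (y * Ly) by ring,
        Real.sqrt_mul (sq_nonneg b) (y * Ly), Real.sqrt_sq hb]
    rw [e1, e2]
    calc Real.sqrt ((a * x) * (a * Lx)) + Real.sqrt ((b * y) * (b * Ly))
        ≤ Real.sqrt ((a * x + b * y) * (a * Lx + b * Ly)) :=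
          sqrt_mul_add_le _ _ _ _ (by positivity) (by positivity) (by positivity) (by positivity)
      _ ≤ Real.sqrt ((a * x + b * y) * Real.log (1 + (a * x + b * y))) := by
          apply Real.sqrt_le_sqrt
          apply mul_le_mul_of_nonneg_left hlog (by positivity)
  simpa using key
end

section
/- Let F(t) = t · log(1 + t) and f(t) = F'(t) = log(1 + t) + t/(1 + t) for t > 0. Then the function t ↦ F(t)/f(t) is convex on (0, ∞). -/
open Real Set

/-- `log (1+x) ≤ x` for `x > 0`. -/
private lemma aux_log_le (x : ℝ) (hx : 0 < x) : Real.log (1 + x) ≤ x := by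
  have := Real.log_le_sub_one_of_pos (show (0:ℝ) < 1 + x by linarith)
  linarith

/-- `x ≤ (1+x) * log (1+x)` for `x > 0`. -/
private lemma aux_le_log (x : ℝ) (hx : 0 < x) : x ≤ (1 + x) * Real.log (1 + x) := by
  have h1 : (0:ℝ) < 1 + x := by linarith
  have h2 := Real.log_le_sub_one_of_pos (show (0:ℝ) < (1 + x)⁻¹ by positivity)
  rw [Real.log_inv] at h2
  have h3 : 1 - (1 + x)⁻¹ ≤ Real.log (1 + x) := by linarith
  have h4 : (1 + x) * (1 - (1 + x)⁻¹) ≤ (1 + x) * Real.log (1 + x) :=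
    mul_le_mul_of_nonneg_left h3 h1.le
  have h5 : (1 + x) * (1 - (1 + x)⁻¹) = x := by field_simp; ring
  linarith

private noncomputable def Nf (x : ℝ) : ℝ := x * (2 + x) * Real.log (1 + x)
private noncomputable def Df (x : ℝ) : ℝ := (1 + x) * Real.log (1 + x) + x
private noncomputable def phi (x : ℝ) : ℝ := 1 - Nf x / (Df x) ^ 2

private lemma hasDerivAt_L (x : ℝ) (hx : 0 < x) :
    HasDerivAt (fun t : ℝ => Real.log (1 + t)) (1 / (1 + x)) x := by
  have h1 : (1 : ℝ) + x ≠ 0 := by positivity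
  simpa using ((hasDerivAt_id x).const_add 1).log h1

private lemma Df_pos (x : ℝ) (hx : 0 < x) : 0 < Df x := by
  have hl : 0 < Real.log (1 + x) := Real.log_pos (by linarith)
  have : (0:ℝ) < 1 + x := by linarith
  have := mul_pos this hl
  unfold Df; linarith

private lemma f_pos (x : ℝ) (hx : 0 < x) : 0 < Real.log (1 + x) + x / (1 + x) := by
  have hl : 0 < Real.log (1 + x) := Real.log_pos (by linarith)
  have h1 : (0:ℝ) < 1 + x := by linarith
  have : 0 < x / (1 + x) := by positivity
  linarith

private lemma hasDerivAt_g (x : ℝ) (hx : 0 < x) :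
    HasDerivAt (fun t : ℝ => (t * Real.log (1 + t)) / (Real.log (1 + t) + t / (1 + t)))
      (phi x) x := by
  have h1 : (0:ℝ) < 1 + x := by linarith
  have h1' : (1:ℝ) + x ≠ 0 := h1.ne'
  have hL := hasDerivAt_L x hx
  have hF : HasDerivAt (fun t : ℝ => t * Real.log (1 + t))
      (1 * Real.log (1 + x) + x * (1 / (1 + x))) x := (hasDerivAt_id x).mul hL
  have hq : HasDerivAt (fun t : ℝ => t / (1 + t))
      ((1 * (1 + x) - x * 1) / (1 + x) ^ 2) x :=
    (hasDerivAt_id x).div ((hasDerivAt_id x).const_add 1) h1'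
  have hf : HasDerivAt (fun t : ℝ => Real.log (1 + t) + t / (1 + t))
      (1 / (1 + x) + (1 * (1 + x) - x * 1) / (1 + x) ^ 2) x := hL.add hq
  have hfne : Real.log (1 + x) + x / (1 + x) ≠ 0 := (f_pos x hx).ne'
  have hg := hF.div hf hfne
  refine hg.congr_deriv ?_
  have hl : 0 < Real.log (1 + x) := Real.log_pos (by linarith)
  have hD : Df x ≠ 0 := (Df_pos x hx).ne'
  unfold phi Nf Df at *
  field_simp
  ring

private lemma hasDerivAt_phi (x : ℝ) (hx : 0 < x) :
    HasDerivAt phi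
      ((2 * Nf x * ((1 * Real.log (1 + x) + (1 + x) * (1 / (1 + x))) + 1)
        - ((1 * (2 + x) + x * 1) * Real.log (1 + x) + x * (2 + x) * (1 / (1 + x))) * Df x)
        * Df x / (Df x) ^ 4) x := by
  have h1 : (0:ℝ) < 1 + x := by linarith
  have hL := hasDerivAt_L x hx
  have hN : HasDerivAt Nf
      ((1 * (2 + x) + x * 1) * Real.log (1 + x) + x * (2 + x) * (1 / (1 + x))) x :=
    ((hasDerivAt_id x).mul ((hasDerivAt_id x).const_add 2)).mul hL
  have hD : HasDerivAt Df
      ((1 * Real.log (1 + x) + (1 + x) * (1 / (1 + x))) + 1) x :=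
    (((hasDerivAt_id x).const_add 1).mul hL).add (hasDerivAt_id x)
  have hD2 : HasDerivAt (fun t => (Df t) ^ 2)
      (2 * Df x ^ 1 * ((1 * Real.log (1 + x) + (1 + x) * (1 / (1 + x))) + 1)) x := hD.pow 2
  have hDne : Df x ^ 2 ≠ 0 := pow_ne_zero 2 (Df_pos x hx).ne'
  have h := (hasDerivAt_const x (1:ℝ)).sub (hN.div hD2 hDne)
  refine h.congr_deriv ?_
  have hDne' : Df x ≠ 0 := (Df_pos x hx).ne'
  field_simp
  ring

private lemma key_ineq (x : ℝ) (hx : 0 < x) :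
    0 ≤ 2 * Nf x * ((1 * Real.log (1 + x) + (1 + x) * (1 / (1 + x))) + 1)
        - ((1 * (2 + x) + x * 1) * Real.log (1 + x) + x * (2 + x) * (1 / (1 + x))) * Df x := by
  have h1 : (0:ℝ) < 1 + x := by linarith
  have h1' : (1:ℝ) + x ≠ 0 := h1.ne'
  set l := Real.log (1 + x) with hl
  have hlpos : 0 < l := Real.log_pos (by linarith)
  have hle : l ≤ x := aux_log_le x hx
  have hge : x ≤ (1 + x) * l := aux_le_log x hx
  have key : 2 * Nf x * ((1 * l + (1 + x) * (1 / (1 + x))) + 1)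
      - ((1 * (2 + x) + x * 1) * l + x * (2 + x) * (1 / (1 + x))) * Df x
      = (x * (1 + x) * (4 + x) * l - 2 * (1 + x) * l ^ 2 - x ^ 2 * (2 + x)) / (1 + x) := by
    unfold Nf Df
    field_simp
    ring
  rw [key]
  apply div_nonneg _ h1.le
  nlinarith [mul_nonneg (mul_nonneg (by linarith : (0:ℝ) ≤ 2 * (1 + x)) hlpos.le)
      (by linarith : (0:ℝ) ≤ x - l),
    mul_nonneg (mul_nonneg hx.le (by linarith : (0:ℝ) ≤ 2 + x))
      (by linarith : (0:ℝ) ≤ (1 + x) * l - x)]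

private lemma phi_mono : MonotoneOn phi (Set.Ioi 0) := by
  apply monotoneOn_of_deriv_nonneg (convex_Ioi 0)
  · exact fun x hx => (hasDerivAt_phi x hx).continuousAt.continuousWithinAt
  · rw [interior_Ioi]
    exact fun x hx => (hasDerivAt_phi x hx).differentiableAt.differentiableWithinAt
  · rw [interior_Ioi]
    intro x hx
    rw [(hasDerivAt_phi x hx).deriv]
    have hD := Df_pos x hx
    apply div_nonneg (mul_nonneg (key_ineq x hx) hD.le) (by positivity)

/-- For `F t = t * log (1 + t)` and `f t = F' t = log (1 + t) + t / (1 + t)`,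
the function `t ↦ F t / f t` is convex on `(0,∞)`. -/
theorem stmt_10 :
    ConvexOn ℝ (Set.Ioi 0)
      (fun t : ℝ => (t * Real.log (1 + t)) / (Real.log (1 + t) + t / (1 + t))) := by
  apply MonotoneOn.convexOn_of_deriv (convex_Ioi 0)
  · exact fun x hx => (hasDerivAt_g x hx).continuousAt.continuousWithinAt
  · rw [interior_Ioi]
    exact fun x hx => (hasDerivAt_g x hx).differentiableAt.differentiableWithinAt
  · rw [interior_Ioi]
    intro a ha b hb hab
    rw [(hasDerivAt_g a ha).deriv, (hasDerivAt_g b hb).deriv]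
    exact phi_mono ha hb hab
end

section
/- Let F(t) = (t + 1) · log(t + 1) − t for t ≥ 0 (the logarithmic entropy function). Then the function t ↦ F(t)^{1/2} is concave on [0, ∞). -/
noncomputable def Fent (t : ℝ) : ℝ := (t + 1) * Real.log (t + 1) - t

lemma Fent_hasDerivAt {t : ℝ} (ht : t + 1 ≠ 0) :
    HasDerivAt Fent (Real.log (t + 1)) t := by
  have h1 : HasDerivAt (fun t : ℝ => t + 1) 1 t := (hasDerivAt_id t).add_const 1
  have h2 : HasDerivAt (fun t : ℝ => Real.log (t + 1)) ((t + 1)⁻¹ * 1) t :=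
    (Real.hasDerivAt_log ht).comp (h₂ := Real.log) t h1
  have h3 := (h1.mul h2).sub (hasDerivAt_id t)
  refine h3.congr_deriv ?_
  field_simp
  ring

lemma Fent_pos {t : ℝ} (ht : 0 < t) : 0 < Fent t := by
  have h1 : (0:ℝ) < t + 1 := by linarith
  have hx : -t / (t + 1) ≠ 0 := by
    apply div_ne_zero <;> [linarith; linarith]
  have h2 := Real.add_one_lt_exp hx
  -- 1/(t+1) < exp (-t/(t+1))
  have h3 : (t + 1)⁻¹ < Real.exp (-t / (t + 1)) := by
    have : -t / (t + 1) + 1 = (t + 1)⁻¹ := by field_simp; ring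
    linarith [this ▸ h2]
  have h4 : Real.log ((t + 1)⁻¹) < -t / (t + 1) := by
    have := Real.log_lt_log (by positivity) h3
    rwa [Real.log_exp] at this
  rw [Real.log_inv, neg_div] at h4
  have h5 : t / (t + 1) < Real.log (t + 1) := by linarith
  have h6 : t < (t + 1) * Real.log (t + 1) := by
    have := (div_lt_iff₀ h1).mp h5
    linarith
  unfold Fent; linarith

lemma psi_mono : Monotone (fun s : ℝ => Real.exp s * (s ^ 2 - 2 * s + 2)) := by
  have hd : ∀ s : ℝ, HasDerivAt (fun s : ℝ => Real.exp s * (s ^ 2 - 2 * s + 2))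
      (Real.exp s * s ^ 2) s := by
    intro s
    have h1 : HasDerivAt (fun s : ℝ => s ^ 2 - 2 * s + 2) (2 * s - 2) s := by
      have := ((hasDerivAt_pow 2 s).sub ((hasDerivAt_id s).const_mul 2)).add_const 2
      simpa using this
    have := (Real.hasDerivAt_exp s).mul h1
    refine this.congr_deriv ?_
    ring
  apply monotone_of_deriv_nonneg
  · exact fun s => (hd s).differentiableAt
  · intro s
    rw [(hd s).deriv]
    positivity

lemma key_ineq_s11 {t : ℝ} (ht : 0 < t) :
    2 * Fent t ≤ (t + 1) * Real.log (t + 1) ^ 2 := by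
  set u := t + 1 with hu
  have hu1 : (1:ℝ) < u := by simp [hu]; linarith
  have hlu : 0 ≤ Real.log u := Real.log_nonneg hu1.le
  have := psi_mono hlu
  simp only [Real.exp_log (by linarith : (0:ℝ) < u), Real.exp_zero] at this
  -- this : 1 * (0^2 - 2*0 + 2) ≤ u * ((log u)^2 - 2*log u + 2)
  have h2 : (2:ℝ) ≤ u * (Real.log u ^ 2 - 2 * Real.log u + 2) := by
    nlinarith [this]
  unfold Fent
  nlinarith [h2]

lemma sqrtF_concave : ConcaveOn ℝ (Set.Ici 0) (fun t => Real.sqrt (Fent t)) := by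
  have hint : interior (Set.Ici (0:ℝ)) = Set.Ioi 0 := interior_Ici
  refine concaveOn_of_hasDerivWithinAt2_nonpos (convex_Ici 0)
    (f' := fun t => Real.log (t + 1) * (2 * Real.sqrt (Fent t))⁻¹)
    (f'' := fun t => (t + 1)⁻¹ * (2 * Real.sqrt (Fent t))⁻¹ +
      Real.log (t + 1) * (-(2 * (Real.log (t + 1) * (2 * Real.sqrt (Fent t))⁻¹)) /
        (2 * Real.sqrt (Fent t)) ^ 2)) ?_ ?_ ?_ ?_
  · apply Real.continuous_sqrt.comp_continuousOn
    apply ContinuousOn.sub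
    · exact (continuousOn_id.add continuousOn_const).mul
        ((Real.continuousOn_log.comp (continuousOn_id.add continuousOn_const)
          (fun x hx => by simp [Set.mem_Ici] at hx ⊢; intro h; linarith)))
    · exact continuousOn_id
  · rw [hint]
    intro x hx
    have hx0 : 0 < x := hx
    have hF : 0 < Fent x := Fent_pos hx0
    have hs : Real.sqrt (Fent x) ≠ 0 := by positivity
    have h := (Real.hasDerivAt_sqrt hF.ne').comp x (Fent_hasDerivAt (by linarith))
    have h2 : HasDerivAt (fun t => Real.sqrt (Fent t))
        (Real.log (x + 1) * (2 * Real.sqrt (Fent x))⁻¹) x := by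
      refine h.congr_deriv ?_
      field_simp
    exact h2.hasDerivWithinAt
  · rw [hint]
    intro x hx
    have hx0 : 0 < x := hx
    have hF : 0 < Fent x := Fent_pos hx0
    have hs : Real.sqrt (Fent x) ≠ 0 := by positivity
    have hne : (2 * Real.sqrt (Fent x)) ≠ 0 := by positivity
    -- derivative of log(t+1)
    have hlog : HasDerivAt (fun t : ℝ => Real.log (t + 1)) ((x + 1)⁻¹ * 1) x :=
      (Real.hasDerivAt_log (by linarith)).comp x ((hasDerivAt_id x).add_const 1)
    -- derivative of 2 * sqrt (Fent t)
    have hsq : HasDerivAt (fun t => Real.sqrt (Fent t))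
        (Real.log (x + 1) * (2 * Real.sqrt (Fent x))⁻¹) x := by
      have h := (Real.hasDerivAt_sqrt hF.ne').comp x (Fent_hasDerivAt (by linarith))
      refine h.congr_deriv ?_
      field_simp
    have h2s : HasDerivAt (fun t => 2 * Real.sqrt (Fent t))
        (2 * (Real.log (x + 1) * (2 * Real.sqrt (Fent x))⁻¹)) x := hsq.const_mul 2
    have hinv := h2s.inv hne
    have hmul := hlog.mul hinv
    have : HasDerivAt (fun t => Real.log (t + 1) * (2 * Real.sqrt (Fent t))⁻¹)
        ((x + 1)⁻¹ * (2 * Real.sqrt (Fent x))⁻¹ +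
          Real.log (x + 1) * (-(2 * (Real.log (x + 1) * (2 * Real.sqrt (Fent x))⁻¹)) /
            (2 * Real.sqrt (Fent x)) ^ 2)) x := by
      refine hmul.congr_deriv ?_
      simp only [Pi.inv_apply]
      ring
    exact this.hasDerivWithinAt
  · rw [hint]
    intro x hx
    have hx0 : 0 < x := hx
    have hF : 0 < Fent x := Fent_pos hx0
    have hs : 0 < Real.sqrt (Fent x) := Real.sqrt_pos.mpr hF
    have hsq : Real.sqrt (Fent x) ^ 2 = Fent x := Real.sq_sqrt hF.le
    have hkey := key_ineq_s11 hx0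
    have hx1 : (0:ℝ) < x + 1 := by linarith
    set s := Real.sqrt (Fent x) with hsdef
    rw [← hsq] at hkey
    show (x + 1)⁻¹ * (2 * s)⁻¹ +
        Real.log (x + 1) * (-(2 * (Real.log (x + 1) * (2 * s)⁻¹)) / (2 * s) ^ 2) ≤ 0
    have expand : (x + 1)⁻¹ * (2 * s)⁻¹ +
        Real.log (x + 1) * (-(2 * (Real.log (x + 1) * (2 * s)⁻¹)) / (2 * s) ^ 2) =
        (2 * s ^ 2 - (x + 1) * Real.log (x + 1) ^ 2) / ((x + 1) * (4 * s ^ 2 * s)) := by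
      field_simp
      ring
    rw [expand]
    apply div_nonpos_of_nonpos_of_nonneg
    · linarith
    · positivity

/-- For the logarithmic entropy `F t = (t + 1) * log (t + 1) - t`,
the function `t ↦ F t ^ (1/2)` is concave on `[0,∞)`. -/
theorem stmt_11 :
    ConcaveOn ℝ (Set.Ici 0)
      (fun t : ℝ => ((t + 1) * Real.log (t + 1) - t) ^ ((1:ℝ) / 2)) := by
  have : (fun t : ℝ => ((t + 1) * Real.log (t + 1) - t) ^ ((1:ℝ) / 2)) =
      fun t => Real.sqrt (Fent t) := by
    funext t
    rw [Real.sqrt_eq_rpow]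
    rfl
  rw [this]
  exact sqrtF_concave
end

section
/- For all t ≥ 0 it holds that 2t + (t + 1) · (log(t + 1) − 2) · log(t + 1) ≥ 0. -/
open Real

private lemma aux_hasDerivAt (s : ℝ) (hs : 0 < s) :
    HasDerivAt (fun x : ℝ => x * ((Real.log x - 1)^2 + 1)) ((Real.log s)^2) s := by
  have h : HasDerivAt (fun x : ℝ => (Real.log x - 1)^2 + 1)
      (2 * (Real.log s - 1) * (1/s)) s := by
    have := ((Real.hasDerivAt_log hs.ne').sub_const 1).pow 2
    simpa [mul_comm, mul_assoc, mul_left_comm] using this.add_const 1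
  have h2 : HasDerivAt (fun x : ℝ => x * ((Real.log x - 1)^2 + 1)) _ s := (hasDerivAt_id' s).mul h
  convert h2 using 1
  field_simp
  ring

private lemma aux_mono : ∀ s : ℝ, 1 ≤ s → 2 ≤ s * ((Real.log s - 1)^2 + 1) := by
  intro s hs
  have hmono : MonotoneOn (fun x : ℝ => x * ((Real.log x - 1)^2 + 1)) (Set.Ici 1) := by
    apply monotoneOn_of_deriv_nonneg (convex_Ici 1)
    · apply ContinuousOn.mul continuousOn_id
      apply ContinuousOn.add _ continuousOn_const
      apply ContinuousOn.pow
      apply ContinuousOn.sub _ continuousOn_const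
      exact Real.continuousOn_log.mono (by intro x hx; simp at hx ⊢; linarith)
    · intro x hx
      exact ((aux_hasDerivAt x (by simp at hx; linarith)).differentiableAt).differentiableWithinAt
    · intro x hx
      simp only [interior_Ici, Set.mem_Ioi] at hx
      rw [(aux_hasDerivAt x (by linarith)).deriv]
      positivity
  have h1 := hmono (Set.self_mem_Ici) (Set.mem_Ici.mpr hs) hs
  simp [Real.log_one] at h1; linarith

/-- For all `t ≥ 0`, `2t + (t + 1)(log(t + 1) - 2) log(t + 1) ≥ 0`. -/
theorem stmt_12 :
    ∀ t : ℝ, 0 ≤ t →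
      0 ≤ 2 * t + (t + 1) * (Real.log (t + 1) - 2) * Real.log (t + 1) := by
  intro t ht
  have h := aux_mono (t + 1) (by linarith)
  nlinarith [h]
end

section
/- Let F(t) = (t + 1) · log(t + 1) − t and f(t) = F'(t) = log(t + 1) for t > 0. Then the function t ↦ F(t)/f(t) is convex on (0, ∞). -/
open Real Set Filter

private lemma hasDerivAt_L13 {x : ℝ} (hx : 0 < x) :
    HasDerivAt (fun t : ℝ => Real.log (t + 1)) ((x + 1)⁻¹) x := by
  have h : HasDerivAt (fun t : ℝ => t + 1) 1 x := (hasDerivAt_id x).add_const 1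
  simpa [one_div] using h.log (by linarith)

private lemma log_ge_13 {x : ℝ} (hx : 0 < x) : x / (x + 1) ≤ Real.log (x + 1) := by
  have h1 : (0:ℝ) < (x + 1)⁻¹ := by positivity
  have h := Real.log_le_sub_one_of_pos h1
  rw [Real.log_inv] at h
  have hx1 : (0:ℝ) < x + 1 := by linarith
  rw [div_le_iff₀ hx1]
  have : (x+1)⁻¹ * (x+1) = 1 := inv_mul_cancel₀ (ne_of_gt hx1)
  nlinarith [h, this]

private lemma key_ineq_13 {x : ℝ} (hx : 0 < x) :
    2 * x ≤ (x + 2) * Real.log (x + 1) := by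
  set φ : ℝ → ℝ := fun t => (t + 2) * Real.log (t + 1) - 2 * t with hφ
  have hder : ∀ y ∈ interior (Ici (0:ℝ)), HasDerivAt φ (Real.log (y+1) - y/(y+1)) y := by
    intro y hy
    rw [interior_Ici] at hy
    have hy0 : (0:ℝ) < y := hy
    have hy1 : (0:ℝ) < y + 1 := by linarith
    have h1 : HasDerivAt (fun t : ℝ => (t + 2) * Real.log (t + 1))
        (1 * Real.log (y+1) + (y+2) * (y+1)⁻¹) y :=
      ((hasDerivAt_id y).add_const 2).mul (hasDerivAt_L13 hy0)
    have h2 : HasDerivAt φ (1 * Real.log (y+1) + (y+2) * (y+1)⁻¹ - 2) y := by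
      have h3 := h1.sub ((hasDerivAt_id y).const_mul 2)
      rw [mul_one] at h3
      exact h3
    convert h2 using 1
    field_simp
    ring
  have hmono : MonotoneOn φ (Ici (0:ℝ)) := by
    apply monotoneOn_of_deriv_nonneg (convex_Ici 0)
    · apply ContinuousOn.sub
      · exact (continuousOn_id.add continuousOn_const).mul
          (Real.continuousOn_log.comp (continuousOn_id.add continuousOn_const)
            (fun y hy => by simp only [mem_Ici] at hy; intro h; simp at h; linarith))
      · exact continuousOn_const.mul continuousOn_id
    · intro y hy
      exact (hder y hy).differentiableAt.differentiableWithinAt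
    · intro y hy
      rw [(hder y hy).deriv]
      rw [interior_Ici] at hy
      have := log_ge_13 (show (0:ℝ) < y from hy)
      linarith
  have h0 : φ 0 ≤ φ x := hmono (by simp) (le_of_lt hx).ge.le (le_of_lt hx)
  simp [hφ] at h0
  linarith

/-- For `F t = (t + 1) * log (t + 1) - t` and `f t = F' t = log (t + 1)`,
the function `t ↦ F t / f t` is convex on `(0,∞)`. -/
theorem stmt_13 :
    ConvexOn ℝ (Set.Ioi 0)
      (fun t : ℝ => ((t + 1) * Real.log (t + 1) - t) / Real.log (t + 1)) := by
  set g : ℝ → ℝ := fun t => ((t + 1) * Real.log (t + 1) - t) / Real.log (t + 1) with hg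
  set G1 : ℝ → ℝ := fun t =>
    1 - ((t + 1) * Real.log (t + 1) - t) / ((t + 1) * (Real.log (t + 1))^2) with hG1
  set G2 : ℝ → ℝ := fun t =>
    ((t + 2) * Real.log (t + 1) - 2 * t) / ((t + 1)^2 * (Real.log (t + 1))^3) with hG2
  have basic : ∀ x : ℝ, x ∈ Ioi (0:ℝ) →
      0 < x + 1 ∧ 0 < Real.log (x + 1) := by
    intro x hx
    have hx0 : (0:ℝ) < x := hx
    exact ⟨by linarith, Real.log_pos (by linarith)⟩
  have hFd : ∀ x ∈ Ioi (0:ℝ),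
      HasDerivAt (fun t : ℝ => (t + 1) * Real.log (t + 1) - t) (Real.log (x + 1)) x := by
    intro x hx
    obtain ⟨hx1, hL⟩ := basic x hx
    have h1 : HasDerivAt (fun t : ℝ => (t + 1) * Real.log (t + 1))
        (1 * Real.log (x+1) + (x+1) * (x+1)⁻¹) x :=
      ((hasDerivAt_id x).add_const 1).mul (hasDerivAt_L13 hx)
    have h2 := h1.sub (hasDerivAt_id x)
    refine h2.congr_deriv ?_
    field_simp
    ring
  have hgd : ∀ x ∈ Ioi (0:ℝ), HasDerivAt g (G1 x) x := by
    intro x hx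
    obtain ⟨hx1, hL⟩ := basic x hx
    have h := (hFd x hx).div (hasDerivAt_L13 hx) (ne_of_gt hL)
    refine h.congr_deriv ?_
    rw [hG1]
    field_simp
  have hG1d : ∀ x ∈ Ioi (0:ℝ), HasDerivAt G1 (G2 x) x := by
    intro x hx
    obtain ⟨hx1, hL⟩ := basic x hx
    have hD : HasDerivAt (fun t : ℝ => (t + 1) * (Real.log (t + 1))^2)
        (1 * (Real.log (x+1))^2 + (x+1) * (2 * (Real.log (x+1))^1 * (x+1)⁻¹)) x :=
      ((hasDerivAt_id x).add_const 1).mul ((hasDerivAt_L13 hx).pow 2)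
    have hDne : (x + 1) * (Real.log (x + 1))^2 ≠ 0 := by positivity
    have hq := (hFd x hx).div hD hDne
    have h := (hasDerivAt_const x (1:ℝ)).sub hq
    refine h.congr_deriv ?_
    rw [hG2]
    field_simp
    ring
  have hEq : ∀ x ∈ Ioi (0:ℝ), deriv g x = G1 x := fun x hx => (hgd x hx).deriv
  have hev : ∀ x ∈ Ioi (0:ℝ), deriv g =ᶠ[nhds x] G1 := fun x hx =>
    Filter.eventuallyEq_of_mem (Ioi_mem_nhds hx) hEq
  apply convexOn_of_deriv2_nonneg' (convex_Ioi 0)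
  · intro x hx
    exact (hgd x hx).differentiableAt.differentiableWithinAt
  · intro x hx
    have : DifferentiableAt ℝ G1 x := (hG1d x hx).differentiableAt
    exact ((hev x hx).differentiableAt_iff.mpr this).differentiableWithinAt
  · intro x hx
    obtain ⟨hx1, hL⟩ := basic x hx
    have h2 : deriv (deriv g) x = G2 x := by
      rw [(hev x hx).deriv_eq, (hG1d x hx).deriv]
    have : deriv^[2] g x = G2 x := by
      simpa [Function.iterate_succ, Function.comp] using h2
    rw [this, hG2]
    apply div_nonneg
    · have := key_ineq_13 (show (0:ℝ) < x from hx)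
      linarith
    · positivity
end

section
/- Let p > 1 and ε > 0, and define h(t) = p + ((p − 1)t − ε) · (ε + t)^{(p−2)/2} for t ≥ 0. Then h is non-decreasing on [0, ∞); consequently h(t) ≥ h(0) = p − ε^{p/2} for all t ≥ 0, and in particular h(t) > 0 for all t ≥ 0 whenever ε < p^{2/p}. -/
/-- Let `p > 1`, `ε > 0` and
`h t = p + ((p-1)t - ε) * (ε + t) ^ ((p-2)/2)`. Then `h` is non-decreasing on `[0,∞)`;
consequently `h t ≥ h 0 = p - ε ^ (p/2)` for all `t ≥ 0`, and if moreover
`ε < p ^ (2/p)` then `h t > 0` for all `t ≥ 0`. -/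
theorem stmt_18 (p ε : ℝ) (hp : 1 < p) (hε : 0 < ε) :
    MonotoneOn (fun t : ℝ => p + ((p - 1) * t - ε) * (ε + t) ^ ((p - 2) / 2)) (Set.Ici 0) ∧
    (p + ((p - 1) * 0 - ε) * (ε + 0) ^ ((p - 2) / 2) = p - ε ^ (p / 2)) ∧
    (∀ t ≥ (0:ℝ), p - ε ^ (p / 2) ≤ p + ((p - 1) * t - ε) * (ε + t) ^ ((p - 2) / 2)) ∧
    (ε < p ^ (2 / p) →
      ∀ t ≥ (0:ℝ), 0 < p + ((p - 1) * t - ε) * (ε + t) ^ ((p - 2) / 2)) := by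
  set c : ℝ := (p - 2) / 2 with hc
  -- derivative at every nonnegative t
  have hd : ∀ t : ℝ, 0 ≤ t →
      HasDerivAt (fun t : ℝ => p + ((p - 1) * t - ε) * (ε + t) ^ c)
        ((p - 1) * (ε + t) ^ c + ((p - 1) * t - ε) * (c * (ε + t) ^ (c - 1))) t := by
    intro t ht
    have hs : (0:ℝ) < ε + t := by linarith
    have h1 : HasDerivAt (fun t : ℝ => (ε + t) ^ c) (c * (ε + t) ^ (c - 1)) t := by
      have := (Real.hasDerivAt_rpow_const (x := ε + t) (p := c)
        (Or.inl hs.ne')).comp t ((hasDerivAt_id t).const_add ε)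
      rw [mul_one] at this
      exact this
    have h2 : HasDerivAt (fun t : ℝ => (p - 1) * t - ε) (p - 1) t := by
      simpa using (((hasDerivAt_id t).const_mul (p - 1)).sub_const ε)
    simpa using (h2.mul h1).const_add p
  have key : MonotoneOn (fun t : ℝ => p + ((p - 1) * t - ε) * (ε + t) ^ ((p - 2) / 2))
      (Set.Ici 0) := by
    rw [← hc]
    apply monotoneOn_of_deriv_nonneg (convex_Ici 0)
    · exact fun t ht => (hd t ht).continuousAt.continuousWithinAt
    · intro t ht
      rw [interior_Ici] at ht
      exact ((hd t (le_of_lt ht)).differentiableAt).differentiableWithinAt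
    · intro t ht
      rw [interior_Ici] at ht
      have ht' : (0:ℝ) ≤ t := le_of_lt ht
      rw [(hd t ht').deriv]
      have hs : (0:ℝ) < ε + t := by linarith
      have hsc : (ε + t) ^ c = (ε + t) ^ (c - 1) * (ε + t) := by
        rw [show c = c - 1 + 1 by ring, Real.rpow_add_one hs.ne']
        ring_nf
      have h1 : (0:ℝ) ≤ (ε + t) ^ (c - 1) := Real.rpow_nonneg hs.le _
      have h2 : (0:ℝ) ≤ (p - 1) * (ε + t) + ((p - 1) * t - ε) * c := by
        have heq : (p - 1) * (ε + t) + ((p - 1) * t - ε) * c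
            = p / 2 * ε + p * (p - 1) / 2 * t := by rw [hc]; ring
        rw [heq]
        have h0 : (0:ℝ) ≤ p * (p - 1) / 2 * t :=
          mul_nonneg (by nlinarith) ht'
        nlinarith
      have heq : (p - 1) * (ε + t) ^ c + ((p - 1) * t - ε) * (c * (ε + t) ^ (c - 1))
          = (ε + t) ^ (c - 1) * ((p - 1) * (ε + t) + ((p - 1) * t - ε) * c) := by
        rw [hsc]; ring
      rw [heq]
      exact mul_nonneg h1 h2
  have hval0 : p + ((p - 1) * 0 - ε) * (ε + 0) ^ ((p - 2) / 2) = p - ε ^ (p / 2) := by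
    have hεp : ε ^ (p / 2) = ε * ε ^ ((p - 2) / 2) := by
      rw [show p / 2 = 1 + (p - 2) / 2 by ring, Real.rpow_add hε, Real.rpow_one]
    rw [hεp]; ring_nf
  have h3 : ∀ t ≥ (0:ℝ), p - ε ^ (p / 2) ≤
      p + ((p - 1) * t - ε) * (ε + t) ^ ((p - 2) / 2) := by
    intro t ht
    have := key Set.self_mem_Ici (Set.mem_Ici.mpr ht) ht
    rw [← hval0]
    exact this
  refine ⟨key, hval0, h3, ?_⟩
  intro hεp t ht
  have hp0 : (0:ℝ) < p := by linarith
  have hlt : ε ^ (p / 2) < (p ^ (2 / p)) ^ (p / 2) :=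
    Real.rpow_lt_rpow hε.le hεp (by positivity)
  have heq : (p ^ (2 / p)) ^ (p / 2) = p := by
    rw [← Real.rpow_mul hp0.le, show 2 / p * (p / 2) = 1 by field_simp, Real.rpow_one]
  have := h3 t ht
  rw [heq] at hlt
  linarith
end

section
/- Let f(t) = 1 + √t for t ≥ 0. Then: (i) the function t ↦ f(t)/t = (1 + √t)/t is non-increasing on (0, ∞); (ii) the function s ↦ e^s / f(e^s) = e^s / (1 + e^{s/2}) is convex on ℝ; (iii) setting F(t) = ∫₀^t f(τ) dτ = t + (2/3) t^{3/2}, the function t ↦ F(t)/f(t) is NOT convex on (0, ∞). (Hence f satisfies the hypotheses of the log-concavity theorem for p = 2 but fails hypothesis (2) of the main φ-concavity theorem.) -/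
open Set Real

lemma hconv : ConvexOn ℝ (Set.Ioi (0:ℝ)) (fun x : ℝ => x^2/(1+x)) := by
  refine ⟨convex_Ioi 0, ?_⟩
  intro x hx y hy a b ha hb hab
  simp only [smul_eq_mul] at *
  have hx0 : (0:ℝ) < x := hx
  have hy0 : (0:ℝ) < y := hy
  have hx1 : (0:ℝ) < 1 + x := by linarith
  have hy1 : (0:ℝ) < 1 + y := by linarith
  have hxy1 : (0:ℝ) < 1 + (a*x + b*y) := by nlinarith
  have hb' : b = 1 - a := by linarith
  subst hb'
  rw [show a * (x ^ 2 / (1 + x)) + (1-a) * (y ^ 2 / (1 + y))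
      = (a*x^2*(1+y) + (1-a)*y^2*(1+x))/((1+x)*(1+y)) by field_simp,
    div_le_div_iff₀ hxy1 (by positivity)]
  nlinarith [mul_nonneg (mul_nonneg ha hb) (sq_nonneg (x - y))]

lemma hmono : MonotoneOn (fun x : ℝ => x^2/(1+x)) (Set.Ioi (0:ℝ)) := by
  intro x hx y hy hxy
  have hx0 : (0:ℝ) < x := hx
  have hy0 : (0:ℝ) < y := hy
  simp only
  rw [div_le_div_iff₀ (by linarith) (by linarith)]
  nlinarith [mul_nonneg (mul_pos hx0 hy0).le (sub_nonneg.mpr hxy), mul_nonneg (sub_nonneg.mpr hxy) (by positivity : (0:ℝ) ≤ x + y)]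

lemma e_img : (fun s : ℝ => Real.exp (s/2)) '' Set.univ = Set.Ioi (0:ℝ) := by
  ext y
  simp only [Set.image_univ, Set.mem_range, Set.mem_Ioi]
  constructor
  · rintro ⟨x, rfl⟩; exact Real.exp_pos _
  · intro hy; exact ⟨2 * Real.log y, by rw [mul_div_cancel_left₀ _ (by norm_num : (2:ℝ) ≠ 0)]; exact Real.exp_log hy⟩

lemma e_conv : ConvexOn ℝ Set.univ (fun s : ℝ => Real.exp (s/2)) := by
  refine ⟨convex_univ, ?_⟩
  intro x _ y _ a b ha hb hab
  have := convexOn_exp.2 (Set.mem_univ (x/2)) (Set.mem_univ (y/2)) ha hb hab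
  simpa [smul_eq_mul, mul_div_assoc, add_div] using this

/-- For `f t = 1 + √t`:
(i) `t ↦ f t / t` is non-increasing on `(0,∞)`;
(ii) `s ↦ exp s / f (exp s) = exp s / (1 + exp (s/2))` is convex on `ℝ`;
(iii) with `F t = ∫ τ in 0..t, f τ = t + (2/3) t ^ (3/2)`, the function `t ↦ F t / f t`
is NOT convex on `(0,∞)`. -/
theorem stmt_19 :
    AntitoneOn (fun t : ℝ => (1 + Real.sqrt t) / t) (Set.Ioi 0) ∧
    ConvexOn ℝ Set.univ (fun s : ℝ => Real.exp s / (1 + Real.exp (s / 2))) ∧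
    ¬ ConvexOn ℝ (Set.Ioi 0)
        (fun t : ℝ => (t + 2 / 3 * t ^ ((3:ℝ) / 2)) / (1 + Real.sqrt t)) := by
  refine ⟨?_, ?_, ?_⟩
  · -- (i)
    intro a ha b hb hab
    have ha0 : (0:ℝ) < a := ha
    have hb0 : (0:ℝ) < b := hb
    have hsa : Real.sqrt a ≤ Real.sqrt b := Real.sqrt_le_sqrt hab
    have ha2 : Real.sqrt a * Real.sqrt a = a := Real.mul_self_sqrt ha0.le
    have hb2 : Real.sqrt b * Real.sqrt b = b := Real.mul_self_sqrt hb0.le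
    have hsa0 : 0 < Real.sqrt a := Real.sqrt_pos.mpr ha0
    have hsb0 : 0 < Real.sqrt b := Real.sqrt_pos.mpr hb0
    simp only
    rw [div_le_div_iff₀ hb0 ha0]
    nlinarith [mul_nonneg (mul_nonneg hsa0.le hsb0.le) (sub_nonneg.mpr hsa)]
  · -- (ii)
    have hc : ConvexOn ℝ Set.univ ((fun x : ℝ => x^2/(1+x)) ∘ (fun s : ℝ => Real.exp (s/2))) := by
      refine ConvexOn.comp ?_ e_conv ?_
      · rw [e_img]; exact hconv
      · rw [e_img]; exact hmono
    have heq : (fun s : ℝ => Real.exp s / (1 + Real.exp (s / 2))) =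
        ((fun x : ℝ => x^2/(1+x)) ∘ (fun s : ℝ => Real.exp (s/2))) := by
      funext s
      simp only [Function.comp_apply]
      have h2 : Real.exp s = Real.exp (s/2) ^ 2 := by rw [sq, ← Real.exp_add]; ring_nf
      rw [h2]
    rw [heq]; exact hc
  · -- (iii)
    intro h
    have e1 : (1:ℝ) ^ ((3:ℝ)/2) = 1 := Real.one_rpow _
    have e49 : (49:ℝ) ^ ((3:ℝ)/2) = 343 := by
      rw [show (49:ℝ) = 7^(2:ℕ) by norm_num, ← Real.rpow_natCast 7 2,
        ← Real.rpow_mul (by norm_num : (0:ℝ) ≤ 7), show (2:ℕ) * ((3:ℝ)/2) = ((3:ℕ):ℝ) by push_cast; ring,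
        Real.rpow_natCast]
      norm_num
    have e25 : (25:ℝ) ^ ((3:ℝ)/2) = 125 := by
      rw [show (25:ℝ) = 5^(2:ℕ) by norm_num, ← Real.rpow_natCast 5 2,
        ← Real.rpow_mul (by norm_num : (0:ℝ) ≤ 5), show (2:ℕ) * ((3:ℝ)/2) = ((3:ℕ):ℝ) by push_cast; ring,
        Real.rpow_natCast]
      norm_num
    have s49 : Real.sqrt 49 = 7 := by
      rw [show (49:ℝ) = 7^2 by norm_num, Real.sqrt_sq (by norm_num : (0:ℝ) ≤ 7)]
    have s25 : Real.sqrt 25 = 5 := by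
      rw [show (25:ℝ) = 5^2 by norm_num, Real.sqrt_sq (by norm_num : (0:ℝ) ≤ 5)]
    have key := h.2 (show (1:ℝ) ∈ Set.Ioi (0:ℝ) by norm_num)
      (show (49:ℝ) ∈ Set.Ioi (0:ℝ) by norm_num)
      (by norm_num : (0:ℝ) ≤ 1/2) (by norm_num : (0:ℝ) ≤ 1/2) (by norm_num)
    simp only [smul_eq_mul] at key
    rw [show (1:ℝ)/2 * 1 + 1/2 * 49 = 25 by norm_num, e1, e49, e25, s49, s25, Real.sqrt_one] at key
    norm_num at key
end
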